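/- arXiv:2207.11811 — 7 statements merged into one kernel-verified Lean document; each statement's English description precedes it below -/
import Mathlib

section
/- The 3-uniform hypergraph based on the complement of the path P_5 on five vertices is minimal non-metric: it is not metric, but every proper induced subhypergraph of it is metric. -/
universe u

/-- A function `d` is a metric (distance function) on `α`. -/
structure IsMetric {α : Type*} (d : α → α → ℝ) : Prop where
  eq_iff : ∀ x y, d x y = 0 ↔ x = y
  symm : ∀ x y, d x y = d y x
  triangle : ∀ x y z, d x z ≤ d x y + d y z

/-- `[u v w]`: the points are pairwise distinct and `v` lies between `u` and `w`. -/
def MBtw {α : Type*} (d : α → α → ℝ) (u v w : α) : Prop :=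
  u ≠ v ∧ u ≠ w ∧ v ≠ w ∧ d u v + d v w = d u w

/-- The hyperedge set `E_M` associated with a metric space: all triples
`{x,y,z}` such that one of the three points is between the other two. -/
def metricEdges {α : Type*} (d : α → α → ℝ) : Set (Set α) :=
  {s | ∃ u v w : α, s = {u, v, w} ∧ MBtw d u v w}

/-- A 3-uniform hypergraph (given by its hyperedge set on vertex type `V`)
is metric if there is a metric space on ground set `V` with `E = E_M`. -/
def IsMetricHypergraph {V : Type*} (E : Set (Set V)) : Prop :=
  ∃ d : V → V → ℝ, IsMetric d ∧ E = metricEdges d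

/-- The hypergraph based on a graph `G`: the vertex set is `V ∪ {x}` (here
`Option V`, with `none` playing the role of the extra point `x`); the
hyperedges are all three-point subsets of `V` together with all sets
`{x,u,v}` with `{u,v}` an edge of `G`. -/
def basedOn {V : Type*} (G : SimpleGraph V) : Set (Set (Option V)) :=
  {s | (∃ u v w : V, u ≠ v ∧ u ≠ w ∧ v ≠ w ∧ s = {some u, some v, some w}) ∨
       (∃ u v : V, G.Adj u v ∧ s = {none, some u, some v})}

/-- The hyperedge set of the subhypergraph induced on `U`. -/
def inducedEdges {V : Type*} (E : Set (Set V)) (U : Set V) : Set (Set U) :=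
  {s | Subtype.val '' s ∈ E}

/-- The line `L_M(xy)` determined by two points of a metric space. -/
def lineOf {α : Type*} (d : α → α → ℝ) (x y : α) : Set α :=
  {x, y} ∪ {z | ({x, y, z} : Set α) ∈ metricEdges d}

/-- `e` is a two-point set forming an edge of `G`. -/
def IsEdgePair {V : Type*} (G : SimpleGraph V) (e : Set V) : Prop :=
  ∃ u v : V, G.Adj u v ∧ e = {u, v}

/-- The equivalence relation `≡_G`: two pairs are equivalent iff both are
edges of `G` or both are non-edges of `G`. -/
def graphEquiv {V : Type*} (G : SimpleGraph V) (e f : Set V) : Prop :=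
  (IsEdgePair G e ∧ IsEdgePair G f) ∨ (¬ IsEdgePair G e ∧ ¬ IsEdgePair G f)

/-- A relation `r` on two-point subsets of `V` is an obstacle if no metric
space on a superset `W` of `V` has `L_M(ab) = L_M(cd) ↔ {a,b} r {c,d}`
for all two-point subsets `{a,b}`, `{c,d}` of `V`. -/
def IsObstacle {V : Type u} (r : Set V → Set V → Prop) : Prop :=
  ¬ ∃ (W : Type u) (f : V ↪ W) (d : W → W → ℝ), IsMetric d ∧
      ∀ a b c e : V, a ≠ b → c ≠ e →
        (lineOf d (f a) (f b) = lineOf d (f c) (f e) ↔ r {a, b} {c, e})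

/-- The restriction of a relation on two-point subsets of `V` to the
two-point subsets of `U ⊆ V`. -/
def restrictRel {V : Type*} (r : Set V → Set V → Prop) (U : Set V) :
    Set U → Set U → Prop :=
  fun e f => r (Subtype.val '' e) (Subtype.val '' f)

section Aux
variable {α : Type*} {V : Type*}

lemma IsMetric.nonneg {d : α → α → ℝ} (hm : IsMetric d) (a b : α) : 0 ≤ d a b := by
  have h1 := hm.triangle a b a
  have h2 := (hm.eq_iff a a).mpr rfl
  have h3 := hm.symm a b
  linarith

lemma IsMetric.pos {d : α → α → ℝ} (hm : IsMetric d) {a b : α} (h : a ≠ b) : 0 < d a b := by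
  rcases lt_or_eq_of_le (hm.nonneg a b) with h' | h'
  · exact h'
  · exact absurd ((hm.eq_iff a b).mp h'.symm) h

lemma not_mem_strict {d : α → α → ℝ} (hm : IsMetric d) {a b c : α}
    (h : ({a, b, c} : Set α) ∉ metricEdges d) (hab : a ≠ b) (hac : a ≠ c) (hbc : b ≠ c) :
    d a c < d a b + d b c ∧ d b c < d b a + d a c ∧ d a b < d a c + d c b := by
  refine ⟨lt_of_le_of_ne (hm.triangle a b c) ?_, lt_of_le_of_ne (hm.triangle b a c) ?_,
    lt_of_le_of_ne (hm.triangle a c b) ?_⟩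
  · intro he; exact h ⟨a, b, c, rfl, hab, hac, hbc, he.symm⟩
  · intro he
    have h2 : ({b, a, c} : Set α) ∈ metricEdges d := ⟨b, a, c, rfl, hab.symm, hbc, hac, he.symm⟩
    rw [Set.insert_comm] at h2
    exact h h2
  · intro he
    have h2 : ({a, c, b} : Set α) ∈ metricEdges d := ⟨a, c, b, rfl, hac, hab, hbc.symm, he.symm⟩
    rw [Set.pair_comm c b] at h2
    exact h h2

lemma mem_disj {d : α → α → ℝ} (hm : IsMetric d) {a b c : α}
    (hab : a ≠ b) (hac : a ≠ c) (hbc : b ≠ c)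
    (h : ({a, b, c} : Set α) ∈ metricEdges d) :
    d a b + d b c = d a c ∨ d b a + d a c = d b c ∨ d a c + d c b = d a b := by
  obtain ⟨u, v, w, hs, huv, huw, hvw, he⟩ := h
  have hu : u ∈ ({a, b, c} : Set α) := by rw [hs]; simp
  have hv : v ∈ ({a, b, c} : Set α) := by rw [hs]; simp
  have hw : w ∈ ({a, b, c} : Set α) := by rw [hs]; simp
  simp only [Set.mem_insert_iff, Set.mem_singleton_iff] at hu hv hw
  have s1 := hm.symm a b; have s2 := hm.symm a c; have s3 := hm.symm b c
  rcases hu with rfl | rfl | rfl <;> rcases hv with rfl | rfl | rfl <;>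
    rcases hw with rfl | rfl | rfl <;>
    first
      | exact absurd rfl huv
      | exact absurd rfl huw
      | exact absurd rfl hvw
      | (left; linarith)
      | (right; left; linarith)
      | (right; right; linarith)

lemma mem_basedOn_iff (G : SimpleGraph V) {u v w : Option V}
    (huv : u ≠ v) (huw : u ≠ w) (hvw : v ≠ w) :
    {u, v, w} ∈ basedOn G ↔
      ((u ≠ none ∧ v ≠ none ∧ w ≠ none) ∨
       (u = none ∧ ∃ a b, v = some a ∧ w = some b ∧ G.Adj a b) ∨
       (v = none ∧ ∃ a b, u = some a ∧ w = some b ∧ G.Adj a b) ∨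
       (w = none ∧ ∃ a b, u = some a ∧ v = some b ∧ G.Adj a b)) := by
  constructor
  · rintro (⟨p, q, r, hpq, hpr, hqr, hs⟩ | ⟨p, q, hadj, hs⟩)
    · left
      have hu : u ∈ ({u, v, w} : Set (Option V)) := by simp
      have hv' : v ∈ ({u, v, w} : Set (Option V)) := by simp
      have hw' : w ∈ ({u, v, w} : Set (Option V)) := by simp
      rw [hs] at hu hv' hw'
      simp only [Set.mem_insert_iff, Set.mem_singleton_iff] at hu hv' hw'
      refine ⟨?_, ?_, ?_⟩ <;>
        [rcases hu with rfl | rfl | rfl; rcases hv' with rfl | rfl | rfl;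
         rcases hw' with rfl | rfl | rfl] <;> simp
    · have h0 : (none : Option V) ∈ ({u, v, w} : Set (Option V)) := by rw [hs]; simp
      have hvm : v ∈ ({none, some p, some q} : Set (Option V)) := by rw [← hs]; simp
      have hum : u ∈ ({none, some p, some q} : Set (Option V)) := by rw [← hs]; simp
      have hwm : w ∈ ({none, some p, some q} : Set (Option V)) := by rw [← hs]; simp
      simp only [Set.mem_insert_iff, Set.mem_singleton_iff] at h0 hum hvm hwm
      rcases h0 with h0 | h0 | h0
      · right; left
        refine ⟨h0.symm, ?_⟩
        subst h0
        rcases hvm with h1 | h1 | h1 <;> rcases hwm with h2 | h2 | h2 <;>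
          first
            | exact absurd h1.symm huv
            | exact absurd h2.symm huw
            | exact absurd (h1.trans h2.symm) hvw
            | exact ⟨p, q, h1, h2, hadj⟩
            | exact ⟨q, p, h1, h2, hadj.symm⟩
      · right; right; left
        refine ⟨h0.symm, ?_⟩
        subst h0
        rcases hum with h1 | h1 | h1 <;> rcases hwm with h2 | h2 | h2 <;>
          first
            | exact absurd h1 huv
            | exact absurd h2.symm hvw
            | exact absurd (h1.trans h2.symm) huw
            | exact ⟨p, q, h1, h2, hadj⟩
            | exact ⟨q, p, h1, h2, hadj.symm⟩
      · right; right; right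
        refine ⟨h0.symm, ?_⟩
        subst h0
        rcases hum with h1 | h1 | h1 <;> rcases hvm with h2 | h2 | h2 <;>
          first
            | exact absurd h1 huw
            | exact absurd h2 hvw
            | exact absurd (h1.trans h2.symm) huv
            | exact ⟨p, q, h1, h2, hadj⟩
            | exact ⟨q, p, h1, h2, hadj.symm⟩
  · rintro (⟨hu, hv, hw⟩ | ⟨rfl, a, b, rfl, rfl, hadj⟩ | ⟨rfl, a, b, rfl, rfl, hadj⟩ |
      ⟨rfl, a, b, rfl, rfl, hadj⟩)
    · obtain ⟨a, ha⟩ := Option.ne_none_iff_exists'.mp hu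
      obtain ⟨b, hb⟩ := Option.ne_none_iff_exists'.mp hv
      obtain ⟨c, hc⟩ := Option.ne_none_iff_exists'.mp hw
      subst ha; subst hb; subst hc
      exact Or.inl ⟨a, b, c, fun h => huv (by rw [h]), fun h => huw (by rw [h]),
        fun h => hvw (by rw [h]), rfl⟩
    · exact Or.inr ⟨a, b, hadj, rfl⟩
    · refine Or.inr ⟨a, b, hadj, ?_⟩
      rw [Set.insert_comm]
    · refine Or.inr ⟨a, b, hadj, ?_⟩
      rw [Set.pair_comm (some b) none, Set.insert_comm (some a) none]

end Aux

section Aux2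
variable {α : Type*} {V : Type*}

lemma basedOn_three (G : SimpleGraph V) :
    ∀ s ∈ basedOn G, ∃ u v w : Option V, u ≠ v ∧ u ≠ w ∧ v ≠ w ∧ s = {u, v, w} := by
  rintro s (⟨u, v, w, h1, h2, h3, rfl⟩ | ⟨u, v, hadj, rfl⟩)
  · exact ⟨some u, some v, some w, by simp [h1], by simp [h2], by simp [h3], rfl⟩
  · exact ⟨none, some u, some v, by simp, by simp, by simp [hadj.ne], rfl⟩

lemma lemmaR (E : Set (Set V))
    (hE3 : ∀ s ∈ E, ∃ u v w : V, u ≠ v ∧ u ≠ w ∧ v ≠ w ∧ s = {u, v, w})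
    (U : Set V) (D : V → V → ℝ) (hD : IsMetric D)
    (H : ∀ u v w : V, u ∈ U → v ∈ U → w ∈ U → u ≠ v → u ≠ w → v ≠ w →
      (({u, v, w} : Set V) ∈ E ↔
        (D u v + D v w = D u w ∨ D v u + D u w = D v w ∨ D u w + D w v = D u v))) :
    IsMetricHypergraph (inducedEdges E U) := by
  refine ⟨fun p q => D p.1 q.1, ⟨?_, ?_, ?_⟩, ?_⟩
  · intro p q
    rw [hD.eq_iff]
    exact ⟨fun h => Subtype.ext h, fun h => congrArg _ h⟩
  · intro p q; exact hD.symm _ _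
  · intro p q r; exact hD.triangle _ _ _
  · ext s
    constructor
    · intro hs
      obtain ⟨u, v, w, huv, huw, hvw, hsEq⟩ := hE3 _ hs
      have hu : u ∈ Subtype.val '' s := by rw [hsEq]; simp
      have hv : v ∈ Subtype.val '' s := by rw [hsEq]; simp
      have hw : w ∈ Subtype.val '' s := by rw [hsEq]; simp
      obtain ⟨p, hp, hpu⟩ := hu
      obtain ⟨q, hq, hqv⟩ := hv
      obtain ⟨r, hr, hrw⟩ := hw
      subst hpu; subst hqv; subst hrw
      have hseq : s = {p, q, r} := by
        apply Subtype.val_injective.image_injective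
        rw [hsEq]
        rw [Set.image_insert_eq, Set.image_insert_eq, Set.image_singleton]
      have hpq : p ≠ q := fun h => huv (by rw [h])
      have hpr : p ≠ r := fun h => huw (by rw [h])
      have hqr : q ≠ r := fun h => hvw (by rw [h])
      have hd := (H p.1 q.1 r.1 p.2 q.2 r.2 huv huw hvw).mp (hsEq ▸ hs)
      rcases hd with hd | hd | hd
      · exact ⟨p, q, r, hseq, hpq, hpr, hqr, hd⟩
      · refine ⟨q, p, r, ?_, hpq.symm, hqr, hpr, hd⟩
        rw [hseq, Set.insert_comm]
      · refine ⟨p, r, q, ?_, hpr, hpq, hqr.symm, hd⟩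
        rw [hseq, Set.pair_comm q r]
    · rintro ⟨p, q, r, hseq, hpq, hpr, hqr, he⟩
      have huv : p.1 ≠ q.1 := fun h => hpq (Subtype.ext h)
      have huw : p.1 ≠ r.1 := fun h => hpr (Subtype.ext h)
      have hvw : q.1 ≠ r.1 := fun h => hqr (Subtype.ext h)
      have : Subtype.val '' s = {p.1, q.1, r.1} := by
        rw [hseq, Set.image_insert_eq, Set.image_insert_eq, Set.image_singleton]
      show Subtype.val '' s ∈ E
      rw [this]
      exact (H p.1 q.1 r.1 p.2 q.2 r.2 huv huw hvw).mpr (Or.inl he)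

lemma natMetric (Q : α → α → ℕ)
    (h : ∀ u v w : α, (Q u v = 0 ↔ u = v) ∧ Q u v = Q v u ∧ Q u w ≤ Q u v + Q v w) :
    IsMetric (fun u v => (Q u v : ℝ)) := by
  refine ⟨fun u v => ?_, fun u v => ?_, fun u v w => ?_⟩
  · simpa using (h u v u).1
  · exact_mod_cast congrArg (Nat.cast : ℕ → ℝ) (h u v u).2.1
  · exact_mod_cast (h u v w).2.2

lemma castDisj (Q : α → α → ℕ) (u v w : α) :
    (((Q u v : ℝ)) + (Q v w : ℝ) = (Q u w : ℝ) ∨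
     ((Q v u : ℝ)) + (Q u w : ℝ) = (Q v w : ℝ) ∨
     ((Q u w : ℝ)) + (Q w v : ℝ) = (Q u v : ℝ)) ↔
    (Q u v + Q v w = Q u w ∨ Q v u + Q u w = Q v w ∨ Q u w + Q w v = Q u v) := by
  norm_cast

def cadj (i j : Fin 5) : Prop := i ≠ j ∧ ¬(i.val + 1 = j.val ∨ j.val + 1 = i.val)

instance : DecidableRel cadj := fun i j => by unfold cadj; infer_instance

lemma cadj_iff (i j : Fin 5) : ((SimpleGraph.pathGraph 5)ᶜ).Adj i j ↔ cadj i j := by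
  rw [SimpleGraph.compl_adj, SimpleGraph.pathGraph_adj, cadj]

def ECq (u v w : Option (Fin 5)) : Prop :=
  (u ≠ none ∧ v ≠ none ∧ w ≠ none) ∨
  (u = none ∧ ∃ a b, v = some a ∧ w = some b ∧ cadj a b) ∨
  (v = none ∧ ∃ a b, u = some a ∧ w = some b ∧ cadj a b) ∨
  (w = none ∧ ∃ a b, u = some a ∧ v = some b ∧ cadj a b)

instance (u v w : Option (Fin 5)) : Decidable (ECq u v w) := by unfold ECq; infer_instance

lemma EC_iff {u v w : Option (Fin 5)} (huv : u ≠ v) (huw : u ≠ w) (hvw : v ≠ w) :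
    {u, v, w} ∈ basedOn (SimpleGraph.pathGraph 5)ᶜ ↔ ECq u v w := by
  rw [mem_basedOn_iff _ huv huw hvw]
  unfold ECq
  simp only [cadj_iff]

end Aux2

def ix : Option (Fin 5) → Fin 6
  | none => 0
  | some i => i.succ

def tab0 : Fin 6 → Fin 6 → ℕ :=
  ![![0, 6, 3, 3, 3, 5],
    ![6, 0, 6, 6, 6, 6],
    ![3, 6, 0, 4, 6, 2],
    ![3, 6, 4, 0, 2, 2],
    ![3, 6, 6, 2, 0, 4],
    ![5, 6, 2, 2, 4, 0]]

def Q0 : Option (Fin 5) → Option (Fin 5) → ℕ := fun u v => tab0 (ix u) (ix v)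

theorem m0 : ∀ u v w : Option (Fin 5), (Q0 u v = 0 ↔ u = v) ∧ Q0 u v = Q0 v u ∧ Q0 u w ≤ Q0 u v + Q0 v w := by decide

theorem h0 : ∀ u v w : Option (Fin 5), u ≠ (some 0 : Option (Fin 5)) → v ≠ (some 0) → w ≠ (some 0) → u ≠ v → u ≠ w → v ≠ w →
    (ECq u v w ↔ (Q0 u v + Q0 v w = Q0 u w ∨ Q0 v u + Q0 u w = Q0 v w ∨ Q0 u w + Q0 w v = Q0 u v)) := by decide

def tab1 : Fin 6 → Fin 6 → ℕ :=
  ![![0, 2, 7, 3, 4, 5],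
    ![2, 0, 7, 5, 2, 7],
    ![7, 7, 0, 7, 7, 7],
    ![3, 5, 7, 0, 3, 2],
    ![4, 2, 7, 3, 0, 5],
    ![5, 7, 7, 2, 5, 0]]

def Q1 : Option (Fin 5) → Option (Fin 5) → ℕ := fun u v => tab1 (ix u) (ix v)

theorem m1 : ∀ u v w : Option (Fin 5), (Q1 u v = 0 ↔ u = v) ∧ Q1 u v = Q1 v u ∧ Q1 u w ≤ Q1 u v + Q1 v w := by decide

theorem h1 : ∀ u v w : Option (Fin 5), u ≠ (some 1 : Option (Fin 5)) → v ≠ (some 1) → w ≠ (some 1) → u ≠ v → u ≠ w → v ≠ w →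
    (ECq u v w ↔ (Q1 u v + Q1 v w = Q1 u w ∨ Q1 v u + Q1 u w = Q1 v w ∨ Q1 u w + Q1 w v = Q1 u v)) := by decide

def tab2 : Fin 6 → Fin 6 → ℕ :=
  ![![0, 3, 3, 5, 5, 5],
    ![3, 0, 4, 5, 2, 2],
    ![3, 4, 0, 5, 2, 2],
    ![5, 5, 5, 0, 5, 5],
    ![5, 2, 2, 5, 0, 4],
    ![5, 2, 2, 5, 4, 0]]

def Q2 : Option (Fin 5) → Option (Fin 5) → ℕ := fun u v => tab2 (ix u) (ix v)

theorem m2 : ∀ u v w : Option (Fin 5), (Q2 u v = 0 ↔ u = v) ∧ Q2 u v = Q2 v u ∧ Q2 u w ≤ Q2 u v + Q2 v w := by decide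

theorem h2 : ∀ u v w : Option (Fin 5), u ≠ (some 2 : Option (Fin 5)) → v ≠ (some 2) → w ≠ (some 2) → u ≠ v → u ≠ w → v ≠ w →
    (ECq u v w ↔ (Q2 u v + Q2 v w = Q2 u w ∨ Q2 v u + Q2 u w = Q2 v w ∨ Q2 u w + Q2 w v = Q2 u v)) := by decide

def tab3 : Fin 6 → Fin 6 → ℕ :=
  ![![0, 3, 4, 4, 7, 2],
    ![3, 0, 3, 7, 7, 5],
    ![4, 3, 0, 4, 7, 2],
    ![4, 7, 4, 0, 7, 2],
    ![7, 7, 7, 7, 0, 7],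
    ![2, 5, 2, 2, 7, 0]]

def Q3 : Option (Fin 5) → Option (Fin 5) → ℕ := fun u v => tab3 (ix u) (ix v)

theorem m3 : ∀ u v w : Option (Fin 5), (Q3 u v = 0 ↔ u = v) ∧ Q3 u v = Q3 v u ∧ Q3 u w ≤ Q3 u v + Q3 v w := by decide

theorem h3 : ∀ u v w : Option (Fin 5), u ≠ (some 3 : Option (Fin 5)) → v ≠ (some 3) → w ≠ (some 3) → u ≠ v → u ≠ w → v ≠ w →
    (ECq u v w ↔ (Q3 u v + Q3 v w = Q3 u w ∨ Q3 v u + Q3 u w = Q3 v w ∨ Q3 u w + Q3 w v = Q3 u v)) := by decide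

def tab4 : Fin 6 → Fin 6 → ℕ :=
  ![![0, 3, 3, 3, 5, 6],
    ![3, 0, 4, 6, 2, 6],
    ![3, 4, 0, 2, 2, 6],
    ![3, 6, 2, 0, 4, 6],
    ![5, 2, 2, 4, 0, 6],
    ![6, 6, 6, 6, 6, 0]]

def Q4 : Option (Fin 5) → Option (Fin 5) → ℕ := fun u v => tab4 (ix u) (ix v)

theorem m4 : ∀ u v w : Option (Fin 5), (Q4 u v = 0 ↔ u = v) ∧ Q4 u v = Q4 v u ∧ Q4 u w ≤ Q4 u v + Q4 v w := by decide

theorem h4 : ∀ u v w : Option (Fin 5), u ≠ (some 4 : Option (Fin 5)) → v ≠ (some 4) → w ≠ (some 4) → u ≠ v → u ≠ w → v ≠ w →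
    (ECq u v w ↔ (Q4 u v + Q4 v w = Q4 u w ∨ Q4 v u + Q4 u w = Q4 v w ∨ Q4 u w + Q4 w v = Q4 u v)) := by decide

def tabx : Fin 6 → Fin 6 → ℕ :=
  ![![0, 10, 9, 8, 7, 6],
    ![10, 0, 1, 2, 3, 4],
    ![9, 1, 0, 1, 2, 3],
    ![8, 2, 1, 0, 1, 2],
    ![7, 3, 2, 1, 0, 1],
    ![6, 4, 3, 2, 1, 0]]

def Qx : Option (Fin 5) → Option (Fin 5) → ℕ := fun u v => tabx (ix u) (ix v)

theorem mx : ∀ u v w : Option (Fin 5), (Qx u v = 0 ↔ u = v) ∧ Qx u v = Qx v u ∧ Qx u w ≤ Qx u v + Qx v w := by decide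

theorem hx : ∀ u v w : Option (Fin 5), u ≠ (none : Option (Fin 5)) → v ≠ (none) → w ≠ (none) → u ≠ v → u ≠ w → v ≠ w →
    (ECq u v w ↔ (Qx u v + Qx v w = Qx u w ∨ Qx v u + Qx u w = Qx v w ∨ Qx u w + Qx w v = Qx u v)) := by decide

theorem part2 : ∀ U : Set (Option (Fin 5)), U ≠ Set.univ →
    IsMetricHypergraph (inducedEdges (basedOn (SimpleGraph.pathGraph 5)ᶜ) U) := by
  intro U hU
  have hex : ∃ a, a ∉ U := by
    by_contra h
    push_neg at h
    exact hU (Set.eq_univ_iff_forall.mpr h)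
  obtain ⟨a, ha⟩ := hex
  have key : ∀ aa : Option (Fin 5), aa ∉ U → ∀ Q : Option (Fin 5) → Option (Fin 5) → ℕ,
      (∀ u v w, (Q u v = 0 ↔ u = v) ∧ Q u v = Q v u ∧ Q u w ≤ Q u v + Q v w) →
      (∀ u v w : Option (Fin 5), u ≠ aa → v ≠ aa → w ≠ aa → u ≠ v → u ≠ w → v ≠ w →
        (ECq u v w ↔ (Q u v + Q v w = Q u w ∨ Q v u + Q u w = Q v w ∨ Q u w + Q w v = Q u v))) →
      IsMetricHypergraph (inducedEdges (basedOn (SimpleGraph.pathGraph 5)ᶜ) U) := by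
    intro aa haa Q hQm hQ
    refine lemmaR _ (basedOn_three _) U (fun u v => (Q u v : ℝ)) (natMetric Q hQm) ?_
    intro u v w hu hv hw h1 h2 h3
    rw [EC_iff h1 h2 h3, castDisj]
    exact hQ u v w (fun h => haa (h ▸ hu)) (fun h => haa (h ▸ hv)) (fun h => haa (h ▸ hw)) h1 h2 h3
  rcases a with _ | i
  · exact key none ha Qx mx hx
  · fin_cases i
    · exact key (some 0) ha Q0 m0 h0
    · exact key (some 1) ha Q1 m1 h1
    · exact key (some 2) ha Q2 m2 h2
    · exact key (some 3) ha Q3 m3 h3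
    · exact key (some 4) ha Q4 m4 h4

set_option maxHeartbeats 4000000 in
theorem part1 : ¬ IsMetricHypergraph (basedOn (SimpleGraph.pathGraph 5)ᶜ) := by
  rintro ⟨d, hm, he⟩
  have hsyx0 := hm.symm none (some 0)
  have hpox0 := hm.pos (show (none : Option (Fin 5)) ≠ (some 0) by decide)
  have hsyx1 := hm.symm none (some 1)
  have hpox1 := hm.pos (show (none : Option (Fin 5)) ≠ (some 1) by decide)
  have hsyx2 := hm.symm none (some 2)
  have hpox2 := hm.pos (show (none : Option (Fin 5)) ≠ (some 2) by decide)
  have hsyx3 := hm.symm none (some 3)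
  have hpox3 := hm.pos (show (none : Option (Fin 5)) ≠ (some 3) by decide)
  have hsyx4 := hm.symm none (some 4)
  have hpox4 := hm.pos (show (none : Option (Fin 5)) ≠ (some 4) by decide)
  have hsy01 := hm.symm (some 0) (some 1)
  have hpo01 := hm.pos (show ((some 0) : Option (Fin 5)) ≠ (some 1) by decide)
  have hsy02 := hm.symm (some 0) (some 2)
  have hpo02 := hm.pos (show ((some 0) : Option (Fin 5)) ≠ (some 2) by decide)
  have hsy03 := hm.symm (some 0) (some 3)
  have hpo03 := hm.pos (show ((some 0) : Option (Fin 5)) ≠ (some 3) by decide)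
  have hsy04 := hm.symm (some 0) (some 4)
  have hpo04 := hm.pos (show ((some 0) : Option (Fin 5)) ≠ (some 4) by decide)
  have hsy12 := hm.symm (some 1) (some 2)
  have hpo12 := hm.pos (show ((some 1) : Option (Fin 5)) ≠ (some 2) by decide)
  have hsy13 := hm.symm (some 1) (some 3)
  have hpo13 := hm.pos (show ((some 1) : Option (Fin 5)) ≠ (some 3) by decide)
  have hsy14 := hm.symm (some 1) (some 4)
  have hpo14 := hm.pos (show ((some 1) : Option (Fin 5)) ≠ (some 4) by decide)
  have hsy23 := hm.symm (some 2) (some 3)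
  have hpo23 := hm.pos (show ((some 2) : Option (Fin 5)) ≠ (some 3) by decide)
  have hsy24 := hm.symm (some 2) (some 4)
  have hpo24 := hm.pos (show ((some 2) : Option (Fin 5)) ≠ (some 4) by decide)
  have hsy34 := hm.symm (some 3) (some 4)
  have hpo34 := hm.pos (show ((some 3) : Option (Fin 5)) ≠ (some 4) by decide)
  have htAx01 := hm.triangle none (some 0) (some 1)
  have htBx01 := hm.triangle (some 0) none (some 1)
  have htCx01 := hm.triangle none (some 1) (some 0)
  have htAx02 := hm.triangle none (some 0) (some 2)
  have htBx02 := hm.triangle (some 0) none (some 2)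
  have htCx02 := hm.triangle none (some 2) (some 0)
  have htAx03 := hm.triangle none (some 0) (some 3)
  have htBx03 := hm.triangle (some 0) none (some 3)
  have htCx03 := hm.triangle none (some 3) (some 0)
  have htAx04 := hm.triangle none (some 0) (some 4)
  have htBx04 := hm.triangle (some 0) none (some 4)
  have htCx04 := hm.triangle none (some 4) (some 0)
  have htAx12 := hm.triangle none (some 1) (some 2)
  have htBx12 := hm.triangle (some 1) none (some 2)
  have htCx12 := hm.triangle none (some 2) (some 1)
  have htAx13 := hm.triangle none (some 1) (some 3)
  have htBx13 := hm.triangle (some 1) none (some 3)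
  have htCx13 := hm.triangle none (some 3) (some 1)
  have htAx14 := hm.triangle none (some 1) (some 4)
  have htBx14 := hm.triangle (some 1) none (some 4)
  have htCx14 := hm.triangle none (some 4) (some 1)
  have htAx23 := hm.triangle none (some 2) (some 3)
  have htBx23 := hm.triangle (some 2) none (some 3)
  have htCx23 := hm.triangle none (some 3) (some 2)
  have htAx24 := hm.triangle none (some 2) (some 4)
  have htBx24 := hm.triangle (some 2) none (some 4)
  have htCx24 := hm.triangle none (some 4) (some 2)
  have htAx34 := hm.triangle none (some 3) (some 4)
  have htBx34 := hm.triangle (some 3) none (some 4)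
  have htCx34 := hm.triangle none (some 4) (some 3)
  have htA012 := hm.triangle (some 0) (some 1) (some 2)
  have htB012 := hm.triangle (some 1) (some 0) (some 2)
  have htC012 := hm.triangle (some 0) (some 2) (some 1)
  have htA013 := hm.triangle (some 0) (some 1) (some 3)
  have htB013 := hm.triangle (some 1) (some 0) (some 3)
  have htC013 := hm.triangle (some 0) (some 3) (some 1)
  have htA014 := hm.triangle (some 0) (some 1) (some 4)
  have htB014 := hm.triangle (some 1) (some 0) (some 4)
  have htC014 := hm.triangle (some 0) (some 4) (some 1)
  have htA023 := hm.triangle (some 0) (some 2) (some 3)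
  have htB023 := hm.triangle (some 2) (some 0) (some 3)
  have htC023 := hm.triangle (some 0) (some 3) (some 2)
  have htA024 := hm.triangle (some 0) (some 2) (some 4)
  have htB024 := hm.triangle (some 2) (some 0) (some 4)
  have htC024 := hm.triangle (some 0) (some 4) (some 2)
  have htA034 := hm.triangle (some 0) (some 3) (some 4)
  have htB034 := hm.triangle (some 3) (some 0) (some 4)
  have htC034 := hm.triangle (some 0) (some 4) (some 3)
  have htA123 := hm.triangle (some 1) (some 2) (some 3)
  have htB123 := hm.triangle (some 2) (some 1) (some 3)
  have htC123 := hm.triangle (some 1) (some 3) (some 2)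
  have htA124 := hm.triangle (some 1) (some 2) (some 4)
  have htB124 := hm.triangle (some 2) (some 1) (some 4)
  have htC124 := hm.triangle (some 1) (some 4) (some 2)
  have htA134 := hm.triangle (some 1) (some 3) (some 4)
  have htB134 := hm.triangle (some 3) (some 1) (some 4)
  have htC134 := hm.triangle (some 1) (some 4) (some 3)
  have htA234 := hm.triangle (some 2) (some 3) (some 4)
  have htB234 := hm.triangle (some 3) (some 2) (some 4)
  have htC234 := hm.triangle (some 2) (some 4) (some 3)
  have hnm01 : ({none, some 0, some 1} : Set (Option (Fin 5))) ∉ metricEdges d := by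
    rw [← he]
    intro hmem
    rcases (mem_basedOn_iff _ (by decide) (by decide) (by decide)).mp hmem with
      ⟨h, _, _⟩ | ⟨_, a, b, hv, hw, hadj⟩ | ⟨h, _⟩ | ⟨h, _⟩
    · exact h rfl
    · injection hv with hv'; injection hw with hw'; subst hv'; subst hw'
      rw [cadj_iff] at hadj
      exact (by decide : ¬ cadj 0 1) hadj
    · exact Option.some_ne_none _ h
    · exact Option.some_ne_none _ h
  obtain ⟨hsa01, hsb01, hsc01⟩ := not_mem_strict hm hnm01 (by decide) (by decide) (by decide)
  have hnm12 : ({none, some 1, some 2} : Set (Option (Fin 5))) ∉ metricEdges d := by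
    rw [← he]
    intro hmem
    rcases (mem_basedOn_iff _ (by decide) (by decide) (by decide)).mp hmem with
      ⟨h, _, _⟩ | ⟨_, a, b, hv, hw, hadj⟩ | ⟨h, _⟩ | ⟨h, _⟩
    · exact h rfl
    · injection hv with hv'; injection hw with hw'; subst hv'; subst hw'
      rw [cadj_iff] at hadj
      exact (by decide : ¬ cadj 1 2) hadj
    · exact Option.some_ne_none _ h
    · exact Option.some_ne_none _ h
  obtain ⟨hsa12, hsb12, hsc12⟩ := not_mem_strict hm hnm12 (by decide) (by decide) (by decide)
  have hnm23 : ({none, some 2, some 3} : Set (Option (Fin 5))) ∉ metricEdges d := by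
    rw [← he]
    intro hmem
    rcases (mem_basedOn_iff _ (by decide) (by decide) (by decide)).mp hmem with
      ⟨h, _, _⟩ | ⟨_, a, b, hv, hw, hadj⟩ | ⟨h, _⟩ | ⟨h, _⟩
    · exact h rfl
    · injection hv with hv'; injection hw with hw'; subst hv'; subst hw'
      rw [cadj_iff] at hadj
      exact (by decide : ¬ cadj 2 3) hadj
    · exact Option.some_ne_none _ h
    · exact Option.some_ne_none _ h
  obtain ⟨hsa23, hsb23, hsc23⟩ := not_mem_strict hm hnm23 (by decide) (by decide) (by decide)
  have hnm34 : ({none, some 3, some 4} : Set (Option (Fin 5))) ∉ metricEdges d := by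
    rw [← he]
    intro hmem
    rcases (mem_basedOn_iff _ (by decide) (by decide) (by decide)).mp hmem with
      ⟨h, _, _⟩ | ⟨_, a, b, hv, hw, hadj⟩ | ⟨h, _⟩ | ⟨h, _⟩
    · exact h rfl
    · injection hv with hv'; injection hw with hw'; subst hv'; subst hw'
      rw [cadj_iff] at hadj
      exact (by decide : ¬ cadj 3 4) hadj
    · exact Option.some_ne_none _ h
    · exact Option.some_ne_none _ h
  obtain ⟨hsa34, hsb34, hsc34⟩ := not_mem_strict hm hnm34 (by decide) (by decide) (by decide)
  have hd012 : d (some 0) (some 1) + d (some 1) (some 2) = d (some 0) (some 2) ∨ d (some 1) (some 0) + d (some 0) (some 2) = d (some 1) (some 2) ∨ d (some 0) (some 2) + d (some 2) (some 1) = d (some 0) (some 1) := by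
    apply mem_disj hm (by decide) (by decide) (by decide)
    rw [← he]
    exact Or.inl ⟨0, 1, 2, by decide, by decide, by decide, rfl⟩
  have hd013 : d (some 0) (some 1) + d (some 1) (some 3) = d (some 0) (some 3) ∨ d (some 1) (some 0) + d (some 0) (some 3) = d (some 1) (some 3) ∨ d (some 0) (some 3) + d (some 3) (some 1) = d (some 0) (some 1) := by
    apply mem_disj hm (by decide) (by decide) (by decide)
    rw [← he]
    exact Or.inl ⟨0, 1, 3, by decide, by decide, by decide, rfl⟩
  have hd014 : d (some 0) (some 1) + d (some 1) (some 4) = d (some 0) (some 4) ∨ d (some 1) (some 0) + d (some 0) (some 4) = d (some 1) (some 4) ∨ d (some 0) (some 4) + d (some 4) (some 1) = d (some 0) (some 1) := by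
    apply mem_disj hm (by decide) (by decide) (by decide)
    rw [← he]
    exact Or.inl ⟨0, 1, 4, by decide, by decide, by decide, rfl⟩
  have hd023 : d (some 0) (some 2) + d (some 2) (some 3) = d (some 0) (some 3) ∨ d (some 2) (some 0) + d (some 0) (some 3) = d (some 2) (some 3) ∨ d (some 0) (some 3) + d (some 3) (some 2) = d (some 0) (some 2) := by
    apply mem_disj hm (by decide) (by decide) (by decide)
    rw [← he]
    exact Or.inl ⟨0, 2, 3, by decide, by decide, by decide, rfl⟩
  have hd024 : d (some 0) (some 2) + d (some 2) (some 4) = d (some 0) (some 4) ∨ d (some 2) (some 0) + d (some 0) (some 4) = d (some 2) (some 4) ∨ d (some 0) (some 4) + d (some 4) (some 2) = d (some 0) (some 2) := by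
    apply mem_disj hm (by decide) (by decide) (by decide)
    rw [← he]
    exact Or.inl ⟨0, 2, 4, by decide, by decide, by decide, rfl⟩
  have hd034 : d (some 0) (some 3) + d (some 3) (some 4) = d (some 0) (some 4) ∨ d (some 3) (some 0) + d (some 0) (some 4) = d (some 3) (some 4) ∨ d (some 0) (some 4) + d (some 4) (some 3) = d (some 0) (some 3) := by
    apply mem_disj hm (by decide) (by decide) (by decide)
    rw [← he]
    exact Or.inl ⟨0, 3, 4, by decide, by decide, by decide, rfl⟩
  have hd123 : d (some 1) (some 2) + d (some 2) (some 3) = d (some 1) (some 3) ∨ d (some 2) (some 1) + d (some 1) (some 3) = d (some 2) (some 3) ∨ d (some 1) (some 3) + d (some 3) (some 2) = d (some 1) (some 2) := by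
    apply mem_disj hm (by decide) (by decide) (by decide)
    rw [← he]
    exact Or.inl ⟨1, 2, 3, by decide, by decide, by decide, rfl⟩
  have hd124 : d (some 1) (some 2) + d (some 2) (some 4) = d (some 1) (some 4) ∨ d (some 2) (some 1) + d (some 1) (some 4) = d (some 2) (some 4) ∨ d (some 1) (some 4) + d (some 4) (some 2) = d (some 1) (some 2) := by
    apply mem_disj hm (by decide) (by decide) (by decide)
    rw [← he]
    exact Or.inl ⟨1, 2, 4, by decide, by decide, by decide, rfl⟩
  have hd134 : d (some 1) (some 3) + d (some 3) (some 4) = d (some 1) (some 4) ∨ d (some 3) (some 1) + d (some 1) (some 4) = d (some 3) (some 4) ∨ d (some 1) (some 4) + d (some 4) (some 3) = d (some 1) (some 3) := by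
    apply mem_disj hm (by decide) (by decide) (by decide)
    rw [← he]
    exact Or.inl ⟨1, 3, 4, by decide, by decide, by decide, rfl⟩
  have hd234 : d (some 2) (some 3) + d (some 3) (some 4) = d (some 2) (some 4) ∨ d (some 3) (some 2) + d (some 2) (some 4) = d (some 3) (some 4) ∨ d (some 2) (some 4) + d (some 4) (some 3) = d (some 2) (some 3) := by
    apply mem_disj hm (by decide) (by decide) (by decide)
    rw [← he]
    exact Or.inl ⟨2, 3, 4, by decide, by decide, by decide, rfl⟩
  have hdx02 : d none (some 0) + d (some 0) (some 2) = d none (some 2) ∨ d (some 0) none + d none (some 2) = d (some 0) (some 2) ∨ d none (some 2) + d (some 2) (some 0) = d none (some 0) := by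
    apply mem_disj hm (by decide) (by decide) (by decide)
    rw [← he]
    exact Or.inr ⟨0, 2, (cadj_iff 0 2).mpr (by decide), rfl⟩
  have hdx03 : d none (some 0) + d (some 0) (some 3) = d none (some 3) ∨ d (some 0) none + d none (some 3) = d (some 0) (some 3) ∨ d none (some 3) + d (some 3) (some 0) = d none (some 0) := by
    apply mem_disj hm (by decide) (by decide) (by decide)
    rw [← he]
    exact Or.inr ⟨0, 3, (cadj_iff 0 3).mpr (by decide), rfl⟩
  have hdx04 : d none (some 0) + d (some 0) (some 4) = d none (some 4) ∨ d (some 0) none + d none (some 4) = d (some 0) (some 4) ∨ d none (some 4) + d (some 4) (some 0) = d none (some 0) := by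
    apply mem_disj hm (by decide) (by decide) (by decide)
    rw [← he]
    exact Or.inr ⟨0, 4, (cadj_iff 0 4).mpr (by decide), rfl⟩
  have hdx13 : d none (some 1) + d (some 1) (some 3) = d none (some 3) ∨ d (some 1) none + d none (some 3) = d (some 1) (some 3) ∨ d none (some 3) + d (some 3) (some 1) = d none (some 1) := by
    apply mem_disj hm (by decide) (by decide) (by decide)
    rw [← he]
    exact Or.inr ⟨1, 3, (cadj_iff 1 3).mpr (by decide), rfl⟩
  have hdx14 : d none (some 1) + d (some 1) (some 4) = d none (some 4) ∨ d (some 1) none + d none (some 4) = d (some 1) (some 4) ∨ d none (some 4) + d (some 4) (some 1) = d none (some 1) := by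
    apply mem_disj hm (by decide) (by decide) (by decide)
    rw [← he]
    exact Or.inr ⟨1, 4, (cadj_iff 1 4).mpr (by decide), rfl⟩
  have hdx24 : d none (some 2) + d (some 2) (some 4) = d none (some 4) ∨ d (some 2) none + d none (some 4) = d (some 2) (some 4) ∨ d none (some 4) + d (some 4) (some 2) = d none (some 2) := by
    apply mem_disj hm (by decide) (by decide) (by decide)
    rw [← he]
    exact Or.inr ⟨2, 4, (cadj_iff 2 4).mpr (by decide), rfl⟩
  rcases hd012 with e1 | e1 | e1
  · rcases hdx02 with e2 | e2 | e2
    · linarith only [hsa01, hsa12, e1, e2]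
    · rcases hd023 with e3 | e3 | e3
      · linarith only [htBx03, hsa23, e2, e3]
      · linarith only [hsyx0, hsyx2, hsy02, hsy23, htAx03, hsb23, e2, e3]
      · rcases hdx03 with e4 | e4 | e4
        · rcases hdx13 with e5 | e5 | e5
          · rcases hd013 with e6 | e6 | e6
            · linarith only [hsa01, e4, e5, e6]
            · linarith only [hsc01, e4, e5, e6]
            · rcases hd123 with e7 | e7 | e7
              · linarith only [hsa12, hsa23, e5, e7]
              · rcases hd034 with e8 | e8 | e8
                · rcases hd014 with e9 | e9 | e9
                  · rcases hd134 with e10 | e10 | e10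
                    · linarith only [hsa01, e4, e5, e8, e9, e10]
                    · rcases hdx04 with e11 | e11 | e11
                      · linarith only [hsa34, e4, e8, e11]
                      · rcases hdx14 with e12 | e12 | e12
                        · linarith only [hsa12, e1, e2, e9, e11, e12]
                        · linarith only [htA124, htA234, hsb12, e1, e2, e9, e11, e12]
                        · linarith
                      · linarith
                    · linarith only [htAx14, hsc34, e5, e10]
                  · linarith only [htBx03, htA134, hsc01, e4, e5, e8, e9]
                  · linarith only [hsy13, hsy14, hsy34, htAx14, hsc34, e5, e6, e8, e9]
                · rcases hdx04 with e13 | e13 | e13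
                  · rcases hdx14 with e14 | e14 | e14
                    · rcases hd234 with e15 | e15 | e15
                      · linarith only [htB124, hsa34, e5, e7, e14, e15]
                      · linarith only [htAx24, htB134, hsa12, e1, e3, e6, e14, e15]
                      · linarith only [hsy23, hsy24, hsy34, htCx24, htB013, htC024, hsa34, e3, e4, e13, e15]
                    · linarith only [hsyx0, hsyx1, hsy03, hsy13, htA134, hsa12, e1, e2, e6, e8, e13, e14]
                    · linarith only [htC014, hsa01, e13, e14]
                  · linarith only [hsyx0, hsyx3, hsy03, hpo13, htA013, htC034, htA134, hsb34, e4, e8, e13]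
                  · linarith
                · linarith only [htAx04, hsc34, e4, e8]
              · linarith only [hsa01, e1, e3, e4, e5, e7]
          · linarith
          · linarith only [htC013, hsa01, e4, e5]
        · linarith only [hsc23, e2, e3, e4]
        · linarith
    · linarith only [hsy01, hsy02, hsy12, htC014, htA024, hsc01, hsc12, e1, e2]
  · rcases hdx02 with e16 | e16 | e16
    · rcases hd023 with e17 | e17 | e17
      · rcases hdx03 with e18 | e18 | e18
        · linarith only [hsa23, e16, e17, e18]
        · rcases hd013 with e19 | e19 | e19
          · rcases hd034 with e20 | e20 | e20
            · linarith only [htBx04, hsa34, e18, e20]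
            · linarith only [hsyx0, hsyx3, hsy03, htAx04, htB123, hsb34, e18, e20]
            · rcases hd123 with e21 | e21 | e21
              · linarith only [hsa01, hsa12, e16, e17, e19, e21]
              · linarith only [hsy01, hpo02, hsy12, e1, e17, e19, e21]
              · rcases hd124 with e22 | e22 | e22
                · linarith only [hsy23, hpo24, hsy34, htB014, htA134, e1, e17, e20, e21, e22]
                · linarith only [hsy01, hsy02, hsy12, hpo14, hsy23, hsy34, htBx04, htB024, htA234, e1, e19, e20, e21, e22]
                · rcases hdx04 with e23 | e23 | e23
                  · rcases hdx13 with e24 | e24 | e24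
                    · linarith
                    · linarith only [hsb12, hsc23, e21, e24]
                    · rcases hdx14 with e25 | e25 | e25
                      · linarith only [htB134, hsa34, e24, e25]
                      · linarith only [htC024, hsb12, e16, e22, e23, e25]
                      · linarith only [htC014, hsa01, e23, e25]
                  · linarith only [htB234, hsc34, e18, e20, e23]
                  · linarith
          · linarith only [hsyx0, hsyx1, hsy01, hpo13, htBx13, hsa01, e18, e19]
          · linarith only [htCx13, hsb01, e18, e19]
        · linarith only [hsy01, hsy03, hsy12, hsy13, hsy23, htC012, hsa01, hsb01, hsc23, e1, e16, e17, e18]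
      · rcases hdx03 with e26 | e26 | e26
        · rcases hd123 with e27 | e27 | e27
          · linarith only [htB013, hsa23, e1, e16, e26, e27]
          · linarith only [hsy01, hsy02, hsy03, hsy12, htAx12, htAx13, hsa01, e1, e17, e26, e27]
          · rcases hd013 with e28 | e28 | e28
            · linarith only [htAx13, hsa01, e26, e28]
            · linarith only [hsc23, e1, e16, e26, e27, e28]
            · rcases hdx13 with e29 | e29 | e29
              · rcases hd034 with e30 | e30 | e30
                · rcases hd014 with e31 | e31 | e31
                  · rcases hd134 with e32 | e32 | e32
                    · linarith only [hsa01, e26, e29, e30, e31, e32]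
                    · rcases hd234 with e33 | e33 | e33
                      · rcases hd024 with e34 | e34 | e34
                        · linarith only [hsa23, e16, e26, e30, e33, e34]
                        · rcases hd124 with e35 | e35 | e35
                          · linarith only [hsa01, hsa23, hsc23, e26, e27, e29, e30, e31, e33, e35]
                          · rcases hdx04 with e36 | e36 | e36
                            · linarith only [hsa34, e26, e30, e36]
                            · rcases hdx14 with e37 | e37 | e37
                              · linarith
                              · linarith only [hsyx1, hsyx3, hsy13, htC034, htB234, hsb34, e29, e32, e37]
                              · linarith
                            · linarith only [hpo03, hsy04, hsy13, hsy14, htCx14, e26, e29, e30, e32, e36]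
                          · linarith
                        · linarith only [htC124, hsa01, hsc23, e1, e16, e27, e29, e31, e34]
                      · linarith only [htAx14, htC014, htC023, htA024, hsc23, e16, e26, e30, e33]
                      · linarith only [hsy23, hsy24, hsy34, htAx24, htC124, hsa01, e26, e27, e29, e30, e31, e33]
                    · linarith only [htAx14, hsc34, e29, e32]
                  · linarith only [htA014, htA134, hsc23, e1, e16, e26, e27, e30, e31]
                  · linarith only [hsy13, hsy14, hsy34, htAx14, htC012, hsc34, e28, e29, e30, e31]
                · rcases hdx04 with e38 | e38 | e38
                  · rcases hdx14 with e39 | e39 | e39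
                    · rcases hd014 with e40 | e40 | e40
                      · linarith only [hsa01, e38, e39, e40]
                      · linarith only [hsc23, e1, e16, e27, e29, e38, e39, e40]
                      · rcases hd234 with e41 | e41 | e41
                        · linarith only [htCx13, htCx14, htCx34, htB024, hsa34, e17, e26, e38, e41]
                        · linarith only [hsy02, hsy03, hsy13, hsy14, hsy23, hsy24, htC012, htB024, htC124, htA134, hsa23, e16, e17, e26, e27, e28, e30, e40, e41]
                        · linarith only [hsy23, hsy24, hsy34, htA124, htB124, htC124, htA234, htB234, hsc01, hsa23, hsb23, hsa34, e16, e17, e26, e27, e28, e29, e39, e41]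
                    · linarith only [htB014, hsb12, e1, e16, e38, e39]
                    · linarith only [htC014, hsa01, e38, e39]
                  · linarith only [hsyx0, hsyx2, hsyx3, hsy03, hsy12, htAx14, hsb34, e26, e30, e38]
                  · linarith
                · linarith only [htAx04, hsc34, e26, e30]
              · linarith only [hsb12, hsc23, e27, e29]
              · linarith
        · linarith only [hsyx0, hsyx2, hsy02, htCx14, hsb23, e16, e17, e26]
        · linarith
      · linarith only [htAx03, hsc23, e16, e17]
    · linarith only [hsyx0, hsyx1, hsy01, hpo01, hsy12, hsa01, hsb12, e1, e16]
    · rcases hdx03 with e42 | e42 | e42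
      · linarith only [htB023, hsa23, e16, e42]
      · linarith only [hsyx0, hsyx2, hsy02, hpo03, hsy13, htAx14, htA023, hsb23, e16, e42]
      · rcases hd023 with e43 | e43 | e43
        · linarith
        · rcases hd123 with e44 | e44 | e44
          · linarith
          · linarith only [hpox2, hsy02, hsy03, hpo03, hsy12, hsy13, htAx12, htCx13, htB023, hsc01, e1, e42, e44]
          · rcases hd013 with e45 | e45 | e45
            · linarith
            · linarith only [hsy02, hpo03, hsy23, e1, e43, e44, e45]
            · rcases hdx04 with e46 | e46 | e46
              · linarith only [htB034, hsa34, e42, e46]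
              · linarith only [hsyx0, hsyx3, hsy03, htBx03, htCx13, htA024, htB024, htA034, hsb34, e42, e46]
              · rcases hd034 with e47 | e47 | e47
                · linarith
                · rcases hdx13 with e48 | e48 | e48
                  · linarith
                  · linarith only [hsb12, hsc23, e44, e48]
                  · rcases hdx14 with e49 | e49 | e49
                    · linarith only [htB134, hsa34, e48, e49]
                    · linarith only [hsyx1, hsyx3, hpo03, hsy13, hsy14, hpo23, htCx34, htA013, htB013, htA014, htC014, htC023, htB123, htA134, hsa12, hsc12, hsb34, e48, e49]
                    · rcases hd014 with e50 | e50 | e50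
                      · linarith
                      · linarith only [hsy02, hsy04, hsy13, hsy14, hsy23, htA013, hsa23, e1, e16, e44, e46, e48, e49, e50]
                      · rcases hd234 with e51 | e51 | e51
                        · linarith
                        · linarith only [hsy13, hsy14, hsy23, hsy24, htCx12, htBx13, htCx13, htA014, htC124, hsc23, e16, e42, e43, e44, e45, e47, e50, e51]
                        · linarith only [hsy13, hsy14, hsy23, hsy24, htAx02, htAx13, htC124, hsc34, e44, e48, e49, e51]
                · linarith only [hsy03, hsy04, hsy34, htB134, hsa34, e42, e46, e47]
        · linarith only [hsy02, hsy03, hsy23, hsa23, e16, e42, e43]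
  · rcases hdx02 with e52 | e52 | e52
    · rcases hd023 with e53 | e53 | e53
      · rcases hdx03 with e54 | e54 | e54
        · linarith only [hsa23, e52, e53, e54]
        · rcases hd013 with e55 | e55 | e55
          · rcases hd034 with e56 | e56 | e56
            · linarith only [htBx04, hsa34, e54, e56]
            · linarith only [hsyx0, hsyx1, hsyx3, hsy03, htAx04, hsb34, e54, e56]
            · rcases hd123 with e57 | e57 | e57
              · linarith only [hsa12, hsc12, e1, e53, e55, e57]
              · rcases hdx04 with e58 | e58 | e58
                · rcases hdx13 with e59 | e59 | e59
                  · linarith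
                  · linarith only [hsyx1, hsyx2, hsy12, hpo13, hsa12, hsb23, e57, e59]
                  · rcases hdx14 with e60 | e60 | e60
                    · linarith only [htB134, hsa34, e59, e60]
                    · linarith only [hsyx1, hsyx3, hsy13, htA134, hsb34, e59, e60]
                    · linarith only [htC014, hsc12, e52, e53, e55, e57, e58, e60]
                · linarith only [htAx04, hsc34, e54, e56, e58]
                · linarith
              · linarith only [hsy12, hpo13, hsy23, e1, e53, e55, e57]
          · linarith only [hsy01, hpo02, hsy12, htA123, e1, e53, e55]
          · linarith only [htCx13, hsb01, e54, e55]
        · linarith only [hsyx3, hpo02, hsy03, hsy23, hsa23, hsc23, e52, e53, e54]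
      · rcases hdx03 with e61 | e61 | e61
        · rcases hdx13 with e62 | e62 | e62
          · rcases hd013 with e63 | e63 | e63
            · linarith only [hsc12, e1, e52, e61, e62, e63]
            · linarith only [hsc01, e61, e62, e63]
            · rcases hd123 with e64 | e64 | e64
              · linarith only [hsa12, hsa23, e62, e64]
              · rcases hd034 with e65 | e65 | e65
                · rcases hd014 with e66 | e66 | e66
                  · rcases hd234 with e67 | e67 | e67
                    · linarith only [htB124, hsa23, e1, e52, e61, e65, e66, e67]
                    · linarith only [htCx24, htA013, htA024, htA124, hsc23, e52, e61, e65, e67]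
                    · linarith only [htAx14, htA024, htC134, hsc34, e1, e62, e64, e66, e67]
                  · linarith only [htA134, hsc01, e61, e62, e65, e66]
                  · linarith only [hsy13, hsy14, hsy34, htCx12, htAx14, hsc34, e62, e63, e65, e66]
                · rcases hd124 with e68 | e68 | e68
                  · rcases hdx04 with e69 | e69 | e69
                    · rcases hdx14 with e70 | e70 | e70
                      · linarith
                      · linarith
                      · linarith
                    · linarith only [hsyx0, hsyx1, hsyx3, hsy03, htBx13, htA012, hsb34, e61, e65, e69]
                    · linarith only [hsy03, hsy04, hsy34, htCx01, htAx04, htBx13, htCx23, htBx24, htBx34, htC034, hsc34, e61, e65, e69]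
                  · linarith
                  · linarith only [hpox0, hsy02, hsy03, hsy12, hpo12, hsy13, hsy14, hsy24, hpo24, htAx02, htCx04, htA013, htC014, htB134, hsa01, e1, e53, e64, e65, e68]
                · linarith only [htAx04, hsc34, e61, e65]
              · linarith
          · linarith
          · linarith only [htC013, hsc12, e1, e52, e61, e62]
        · linarith only [hsyx0, hsyx2, hsy02, htAx03, hsb23, e52, e53, e61]
        · linarith
      · linarith only [htAx03, hsc23, e52, e53]
    · linarith only [hsb01, hsc12, e1, e52]
    · rcases hdx03 with e71 | e71 | e71
      · linarith only [htB023, hsa23, e52, e71]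
      · linarith only [hsyx0, hsyx2, hsy02, htA023, hsb23, e52, e71]
      · rcases hd023 with e72 | e72 | e72
        · linarith
        · rcases hdx04 with e73 | e73 | e73
          · linarith only [htB034, hsa34, e71, e73]
          · linarith only [hsyx0, hsyx3, hsy03, htAx23, htA034, htC034, hsb34, e71, e73]
          · rcases hd034 with e74 | e74 | e74
            · linarith
            · rcases hd013 with e75 | e75 | e75
              · linarith only [hpo02, hsy04, hsy13, hsy24, htCx24, htA013, htB024, htB034, htB123, hsc12, hsa23, hsa34, e1, e52, e71, e72, e73, e74, e75]
              · rcases hd123 with e76 | e76 | e76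
                · rcases hd134 with e77 | e77 | e77
                  · linarith
                  · linarith only [hsy02, hsy03, hsy04, hsy13, hsy14, hpo14, htCx14, htCx23, htAx24, htCx24, htB012, htC012, htA014, htA034, htC124, hsa01, hsb01, hsa12, hsa23, hsb34, e52, e72, e73, e74, e76, e77]
                  · rcases hd014 with e78 | e78 | e78
                    · linarith only [hsyx0, hpox0, hsy02, hsy04, hsy12, hsy14, htAx04, htCx12, htCx14, htCx34, hsc01, e1, e71, e72, e73, e75, e76, e78]
                    · linarith only [hsy03, hpo04, hsy34, htB013, e74, e77, e78]
                    · rcases hdx13 with e79 | e79 | e79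
                      · linarith only [hsa12, hsa23, e76, e79]
                      · rcases hdx14 with e80 | e80 | e80
                        · linarith
                        · linarith only [htAx14, htA024, hsc34, e77, e79, e80]
                        · linarith
                      · linarith only [hsy13, hsy14, hsy34, htBx14, htCx23, htA024, htB034, hsa01, e71, e74, e77, e78, e79]
                · linarith only [htB023, hsc01, hsc12, e52, e75, e76]
                · linarith only [hsy03, hpo04, hsy12, hsy13, hsy14, hpo14, hsy23, htAx04, htCx14, htCx23, htAx24, htB012, htC013, htA023, hsa23, hsb23, hsa34, e1, e75, e76]
              · rcases hd123 with e81 | e81 | e81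
                · linarith only [hsy02, hpo03, hsy12, hsy13, htC014, e1, e72, e75, e81]
                · rcases hdx13 with e82 | e82 | e82
                  · linarith
                  · linarith only [hsyx1, hsy02, hsy03, hpo04, hsy12, hsy13, htAx04, htCx13, hsb12, e1, e52, e71, e74, e75, e82]
                  · rcases hdx14 with e83 | e83 | e83
                    · linarith only [htB134, hsa34, e82, e83]
                    · linarith only [hsyx1, hsyx3, hsy13, htAx23, htA023, htA134, hsb34, e82, e83]
                    · linarith only [hsy03, hsy04, hsy13, hsy14, htB134, hsc12, e52, e72, e73, e74, e81, e83]
                · linarith only [hsyx4, hpo02, hsy04, hsy12, hsy13, hsy23, hsy24, htBx13, htBx24, htCx24, htB024, e1, e52, e72, e73, e75, e81]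
            · linarith only [hsy03, hsy04, hsy34, htAx23, htB014, htC024, hsa34, e71, e73, e74]
        · linarith only [hsy02, hsy03, hsy23, hsa23, e52, e71, e72]

/-- The hypergraph based on the complement of the path `P_5` is minimal
non-metric. -/
theorem stmt_9 :
    ¬ IsMetricHypergraph (basedOn (SimpleGraph.pathGraph 5)ᶜ) ∧
    ∀ U : Set (Option (Fin 5)), U ≠ Set.univ →
      IsMetricHypergraph (inducedEdges (basedOn (SimpleGraph.pathGraph 5)ᶜ) U) := by
  exact ⟨part1, part2⟩
end

section
/- If G is a graph such that neither the 3-uniform hypergraph based on G nor the 3-uniform hypergraph based on its complement is metric, then the equivalence relation ≡_G on the two-point subsets of the vertex set of G is an obstacle. -/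
universe u

section Auxiliary

variable {α : Type*}

theorem metric_nonneg {d : α → α → ℝ} (hm : IsMetric d) (x y : α) : 0 ≤ d x y := by
  have h := hm.triangle x y x
  have h0 : d x x = 0 := (hm.eq_iff x x).mpr rfl
  have hs := hm.symm x y
  linarith

theorem metric_pos {d : α → α → ℝ} (hm : IsMetric d) {x y : α} (h : x ≠ y) : 0 < d x y := by
  rcases lt_or_eq_of_le (metric_nonneg hm x y) with h' | h'
  · exact h'
  · exact absurd ((hm.eq_iff x y).mp h'.symm) h

theorem mbtw_symm {d : α → α → ℝ} (hm : IsMetric d) {u v w : α} (h : MBtw d u v w) :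
    MBtw d w v u := by
  obtain ⟨h1, h2, h3, h4⟩ := h
  refine ⟨h3.symm, h2.symm, h1.symm, ?_⟩
  rw [hm.symm w v, hm.symm v u, hm.symm w u]
  linarith

theorem mem_lineOf {d : α → α → ℝ} {x y z : α} :
    z ∈ lineOf d x y ↔ z = x ∨ z = y ∨ ({x, y, z} : Set α) ∈ metricEdges d := by
  simp [lineOf, Set.mem_union, Set.mem_insert_iff, Set.mem_singleton_iff, Set.mem_setOf_eq,
    or_assoc]

theorem edges_elim {d : α → α → ℝ} (hm : IsMetric d) {a b c : α}
    (hab : a ≠ b) (hac : a ≠ c) (hbc : b ≠ c)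
    (h : ({a, b, c} : Set α) ∈ metricEdges d) :
    MBtw d a b c ∨ MBtw d b a c ∨ MBtw d a c b := by
  obtain ⟨u, v, w, hs, hbtw⟩ := h
  have hu : u = a ∨ u = b ∨ u = c := by
    have : u ∈ ({a, b, c} : Set α) := by rw [hs]; simp
    simpa using this
  have hv : v = a ∨ v = b ∨ v = c := by
    have : v ∈ ({a, b, c} : Set α) := by rw [hs]; simp
    simpa using this
  have hw : w = a ∨ w = b ∨ w = c := by
    have : w ∈ ({a, b, c} : Set α) := by rw [hs]; simp
    simpa using this
  rcases hu with rfl | rfl | rfl <;> rcases hv with rfl | rfl | rfl <;>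
    rcases hw with rfl | rfl | rfl <;>
    first
      | exact absurd rfl hbtw.1
      | exact absurd rfl hbtw.2.1
      | exact absurd rfl hbtw.2.2.1
      | exact Or.inl hbtw
      | exact Or.inr (Or.inl hbtw)
      | exact Or.inr (Or.inr hbtw)
      | exact Or.inl (mbtw_symm hm hbtw)
      | exact Or.inr (Or.inl (mbtw_symm hm hbtw))
      | exact Or.inr (Or.inr (mbtw_symm hm hbtw))

end Auxiliary

section Constructions

variable {α : Type*}

theorem triple_perm {a b c a' b' c' : α}
    (h : ∀ t : α, (t = a ∨ t = b ∨ t = c) ↔ (t = a' ∨ t = b' ∨ t = c')) :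
    ({a, b, c} : Set α) = {a', b', c'} := by
  ext t
  simp only [Set.mem_insert_iff, Set.mem_singleton_iff]
  exact h t

theorem mem_edges₁ {d : α → α → ℝ} {a b c : α} (h : MBtw d a b c) :
    ({a, b, c} : Set α) ∈ metricEdges d := ⟨a, b, c, rfl, h⟩

theorem mem_edges₂ {d : α → α → ℝ} {a b c : α} (h : MBtw d b a c) :
    ({a, b, c} : Set α) ∈ metricEdges d := ⟨b, a, c, triple_perm (by tauto), h⟩

theorem mem_edges₃ {d : α → α → ℝ} {a b c : α} (h : MBtw d a c b) :
    ({a, b, c} : Set α) ∈ metricEdges d := ⟨a, c, b, triple_perm (by tauto), h⟩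

/-- Extension of a point map to `Option`. -/
def optExt {V W : Type*} (z : W) (f : V → W) : Option V → W
  | none => z
  | some v => f v

theorem pullback_edges {V W : Type*} {d : W → W → ℝ} (hm : IsMetric d)
    {f : V → W} (hf : Function.Injective f) {z : W} (hz : ∀ t, z ≠ f t) :
    ∃ d₁ : Option V → Option V → ℝ, IsMetric d₁ ∧
      metricEdges d₁ =
        {s | (∃ u v w : V, u ≠ v ∧ u ≠ w ∧ v ≠ w ∧ s = {some u, some v, some w} ∧
                ({f u, f v, f w} : Set W) ∈ metricEdges d) ∨
             (∃ u v : V, u ≠ v ∧ s = {none, some u, some v} ∧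
                ({f u, f v, z} : Set W) ∈ metricEdges d)} := by
  classical
  have hinj : Function.Injective (optExt z f) := by
    intro x y h
    match x, y with
    | none, none => rfl
    | none, some v => exact absurd h (hz v)
    | some u, none => exact absurd h.symm (hz u)
    | some u, some v => exact congrArg some (hf h)
  refine ⟨fun x y => d (optExt z f x) (optExt z f y), ⟨?_, ?_, ?_⟩, ?_⟩
  · intro x y
    exact (hm.eq_iff _ _).trans hinj.eq_iff
  · intro x y; exact hm.symm _ _
  · intro x y z'; exact hm.triangle _ _ _
  · ext s
    constructor
    · rintro ⟨x, y, w', rfl, hb⟩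
      have hb' : MBtw d (optExt z f x) (optExt z f y) (optExt z f w') :=
        ⟨fun h => hb.1 (hinj h), fun h => hb.2.1 (hinj h), fun h => hb.2.2.1 (hinj h),
          hb.2.2.2⟩
      rcases x with _ | u <;> rcases y with _ | v <;> rcases w' with _ | w
      · exact absurd rfl hb.1
      · exact absurd rfl hb.1
      · exact absurd rfl hb.2.1
      · -- none, some v, some w
        refine Or.inr ⟨v, w, fun h => hb.2.2.1 (by rw [h]), rfl, ?_⟩
        exact ⟨z, f v, f w, triple_perm (by tauto), hb'⟩
      · exact absurd rfl hb.2.2.1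
      · -- some u, none, some w
        refine Or.inr ⟨u, w, fun h => hb.2.1 (by rw [h]),
          triple_perm (by tauto), ?_⟩
        exact ⟨f u, z, f w, triple_perm (by tauto), hb'⟩
      · -- some u, some v, none
        refine Or.inr ⟨u, v, fun h => hb.1 (by rw [h]),
          triple_perm (by tauto), ?_⟩
        exact ⟨f u, f v, z, rfl, hb'⟩
      · -- all some
        exact Or.inl ⟨u, v, w, fun h => hb.1 (by rw [h]), fun h => hb.2.1 (by rw [h]),
          fun h => hb.2.2.1 (by rw [h]), rfl, ⟨f u, f v, f w, rfl, hb'⟩⟩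
    · have hlift : ∀ (a b c : V), MBtw d (f a) (f b) (f c) →
          MBtw (fun x y => d (optExt z f x) (optExt z f y)) (some a) (some b) (some c) :=
        fun a b c h => ⟨fun hh => h.1 (by injection hh with hh; rw [hh]),
          fun hh => h.2.1 (by injection hh with hh; rw [hh]),
          fun hh => h.2.2.1 (by injection hh with hh; rw [hh]), h.2.2.2⟩
      have hliftz₁ : ∀ (a b : V), MBtw d (f a) (f b) z →
          MBtw (fun x y => d (optExt z f x) (optExt z f y)) (some a) (some b) none :=
        fun a b h => ⟨fun hh => h.1 (by injection hh with hh; rw [hh]),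
          by simp, by simp, h.2.2.2⟩
      have hliftz₂ : ∀ (a b : V), MBtw d (f a) z (f b) →
          MBtw (fun x y => d (optExt z f x) (optExt z f y)) (some a) none (some b) :=
        fun a b h => ⟨by simp, fun hh => h.2.1 (by injection hh with hh; rw [hh]),
          by simp, h.2.2.2⟩
      rintro (⟨u, v, w, huv, huw, hvw, rfl, hmem⟩ | ⟨u, v, huv, rfl, hmem⟩)
      · rcases edges_elim hm (hf.ne huv) (hf.ne huw) (hf.ne hvw) hmem with h | h | h
        · exact ⟨some u, some v, some w, rfl, hlift u v w h⟩
        · exact ⟨some v, some u, some w, triple_perm (by tauto), hlift v u w h⟩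
        · exact ⟨some u, some w, some v, triple_perm (by tauto), hlift u w v h⟩
      · rcases edges_elim hm (hf.ne huv) (Ne.symm (hz u)) (Ne.symm (hz v)) hmem with h | h | h
        · exact ⟨some u, some v, none, triple_perm (by tauto), hliftz₁ u v h⟩
        · exact ⟨some v, some u, none, triple_perm (by tauto), hliftz₁ v u (mbtw_symm hm (mbtw_symm hm h))⟩
        · exact ⟨some u, none, some v, triple_perm (by tauto), hliftz₂ u v h⟩

end Constructions

section SqrtExtension

theorem lt_sqrt_sq_add_one {x : ℝ} (hx : 0 ≤ x) : x < Real.sqrt (x ^ 2 + 1) := by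
  rw [Real.lt_sqrt hx]
  linarith

theorem sqrt_step {x y : ℝ} (hy : 0 ≤ y) (hxy : y < x) :
    Real.sqrt (x ^ 2 + 1) < Real.sqrt (y ^ 2 + 1) + (x - y) := by
  have hs : y < Real.sqrt (y ^ 2 + 1) := lt_sqrt_sq_add_one hy
  have hpos : 0 < Real.sqrt (y ^ 2 + 1) + (x - y) := by linarith
  rw [Real.sqrt_lt' hpos]
  have hsq : Real.sqrt (y ^ 2 + 1) ^ 2 = y ^ 2 + 1 := Real.sq_sqrt (by positivity)
  nlinarith [mul_pos (sub_pos.mpr hs) (sub_pos.mpr hxy)]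

/-- Distance on `Option V` extending a pulled-back metric, with distances to the
new point given by `g`. -/
def extDist {V W : Type*} (d : W → W → ℝ) (f : V → W) (g : V → ℝ) :
    Option V → Option V → ℝ
  | none, none => 0
  | none, some v => g v
  | some u, none => g u
  | some u, some v => d (f u) (f v)

theorem triples_metric {V W : Type*} {d : W → W → ℝ} (hm : IsMetric d)
    {f : V → W} (hf : Function.Injective f) (v₀ : V)
    (hcol : ∀ a b c : V, a ≠ b → a ≠ c → b ≠ c →
      ({f a, f b, f c} : Set W) ∈ metricEdges d) :
    ∃ d₂ : Option V → Option V → ℝ, IsMetric d₂ ∧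
      metricEdges d₂ =
        {s : Set (Option V) | ∃ u v w : V, u ≠ v ∧ u ≠ w ∧ v ≠ w ∧
          s = {some u, some v, some w}} := by
  classical
  set a : V → ℝ := fun v => d (f v₀) (f v) with ha
  set g : V → ℝ := fun v => Real.sqrt ((a v) ^ 2 + 1) with hg
  have ha_nonneg : ∀ v, 0 ≤ a v := fun v => metric_nonneg hm _ _
  have hg_gt : ∀ v, a v < g v := fun v => lt_sqrt_sq_add_one (ha_nonneg v)
  have hg_pos : ∀ v, 0 < g v := fun v => lt_of_le_of_lt (ha_nonneg v) (hg_gt v)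
  have key1 : ∀ u v : V, u ≠ v → d (f u) (f v) < g u + g v := by
    intro u v huv
    have ht := hm.triangle (f u) (f v₀) (f v)
    have hsym := hm.symm (f u) (f v₀)
    have := hg_gt u
    have := hg_gt v
    simp only [ha] at *
    linarith
  have key2 : ∀ u v : V, u ≠ v → g u < g v + d (f u) (f v) := by
    intro u v huv
    have hδ : 0 < d (f u) (f v) := metric_pos hm (hf.ne huv)
    rcases le_or_gt (a u) (a v) with hle | hlt
    · have : g u ≤ g v := by
        simp only [hg]
        apply Real.sqrt_le_sqrt
        nlinarith [ha_nonneg u]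
      linarith
    · have hstep := sqrt_step (ha_nonneg v) hlt
      have htriangle : a u - a v ≤ d (f u) (f v) := by
        have ht := hm.triangle (f v₀) (f v) (f u)
        have hsym := hm.symm (f v) (f u)
        simp only [ha]
        linarith
      simp only [hg]
      linarith
  refine ⟨extDist d f g, ⟨?_, ?_, ?_⟩, ?_⟩
  · rintro (_ | u) (_ | v)
    · simp [extDist]
    · show g v = 0 ↔ _
      simp [(hg_pos v).ne']
    · show g u = 0 ↔ _
      simp [(hg_pos u).ne']
    · show d (f u) (f v) = 0 ↔ _
      rw [hm.eq_iff]
      exact hf.eq_iff.trans (by simp)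
  · rintro (_ | u) (_ | v)
    · rfl
    · rfl
    · rfl
    · exact hm.symm _ _
  · rintro (_ | u) (_ | v) (_ | w)
    · show (0:ℝ) ≤ 0 + 0; norm_num
    · show g w ≤ 0 + g w; norm_num
    · show (0:ℝ) ≤ g v + g v; positivity
    · show g w ≤ g v + d (f v) (f w)
      rcases eq_or_ne v w with rfl | hne
      · have : d (f v) (f v) = 0 := (hm.eq_iff _ _).mpr rfl
        linarith
      · have := key2 w v hne.symm
        have := hm.symm (f w) (f v)
        linarith
    · show g u ≤ g u + 0; norm_num
    · show d (f u) (f w) ≤ g u + g w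
      rcases eq_or_ne u w with rfl | hne
      · have : d (f u) (f u) = 0 := (hm.eq_iff _ _).mpr rfl
        have := hg_pos u; linarith
      · exact (key1 u w hne).le
    · show g u ≤ d (f u) (f v) + g v
      rcases eq_or_ne u v with rfl | hne
      · have : d (f u) (f u) = 0 := (hm.eq_iff _ _).mpr rfl
        linarith
      · have := key2 u v hne; linarith
    · exact hm.triangle _ _ _
  · ext s
    constructor
    · rintro ⟨x, y, w', rfl, hb⟩
      rcases x with _ | u <;> rcases y with _ | v <;> rcases w' with _ | w
      · exact absurd rfl hb.1
      · exact absurd rfl hb.1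
      · exact absurd rfl hb.2.1
      · -- none, some v, some w : g v + d (f v) (f w) = g w
        exfalso
        have heq : g v + d (f v) (f w) = g w := hb.2.2.2
        have hne : w ≠ v := fun h => hb.2.2.1 (by rw [h])
        have := key2 w v hne
        have := hm.symm (f w) (f v)
        linarith
      · exact absurd rfl hb.2.2.1
      · -- some u, none, some w : g u + g w = d (f u) (f w)
        exfalso
        have heq : g u + g w = d (f u) (f w) := hb.2.2.2
        have hne : u ≠ w := fun h => hb.2.1 (by rw [h])
        have := key1 u w hne
        linarith
      · -- some u, some v, none : d (f u) (f v) + g v = g u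
        exfalso
        have heq : d (f u) (f v) + g v = g u := hb.2.2.2
        have hne : u ≠ v := fun h => hb.1 (by rw [h])
        have := key2 u v hne
        linarith
      · exact ⟨u, v, w, fun h => hb.1 (by rw [h]), fun h => hb.2.1 (by rw [h]),
          fun h => hb.2.2.1 (by rw [h]), rfl⟩
    · rintro ⟨u, v, w, huv, huw, hvw, rfl⟩
      have hlift : ∀ (p q r : V), MBtw d (f p) (f q) (f r) →
          MBtw (extDist d f g) (some p) (some q) (some r) :=
        fun p q r h => ⟨fun hh => h.1 (by injection hh with hh; rw [hh]),
          fun hh => h.2.1 (by injection hh with hh; rw [hh]),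
          fun hh => h.2.2.1 (by injection hh with hh; rw [hh]), h.2.2.2⟩
      rcases edges_elim hm (hf.ne huv) (hf.ne huw) (hf.ne hvw)
          (hcol u v w huv huw hvw) with h | h | h
      · exact ⟨some u, some v, some w, rfl, hlift u v w h⟩
      · exact ⟨some v, some u, some w, triple_perm (by tauto), hlift v u w h⟩
      · exact ⟨some u, some w, some v, triple_perm (by tauto), hlift u w v h⟩

end SqrtExtension

/-- If neither the hypergraph based on `G` nor the one based on its
complement is metric, then `≡_G` is an obstacle. -/
theorem stmt_10 {V : Type u} (G : SimpleGraph V)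
    (h1 : ¬ IsMetricHypergraph (basedOn G))
    (h2 : ¬ IsMetricHypergraph (basedOn Gᶜ)) :
    IsObstacle (graphEquiv G) := by
  rintro ⟨W, f, d, hm, hiff⟩
  classical
  have hf : Function.Injective f := f.injective
  by_cases hVempty : IsEmpty V
  · -- V is empty: basedOn G is empty and realized by the zero metric on Option V
    apply h1
    have hall : ∀ o : Option V, o = none := by
      rintro (_ | v)
      · rfl
      · exact (hVempty.false v).elim
    refine ⟨fun _ _ => 0, ⟨?_, ?_, ?_⟩, ?_⟩
    · intro x y
      exact iff_of_true rfl ((hall x).trans (hall y).symm)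
    · intro x y; rfl
    · intro x y z; norm_num
    · ext s
      constructor
      · rintro (⟨u, _, _, _⟩ | ⟨u, _, _⟩) <;> exact (hVempty.false u).elim
      · rintro ⟨x, y, w, _, hb⟩
        exact (hb.1 ((hall x).trans (hall y).symm)).elim
  · have hV : Nonempty V := not_isEmpty_iff.mp hVempty
    obtain ⟨v₀⟩ := hV
    -- basic facts about lines
    have pair_adj : ∀ {u v : V}, u ≠ v → IsEdgePair G {u, v} → G.Adj u v := by
      rintro u v hne ⟨p, q, hpq, hset⟩
      have hu : u = p ∨ u = q := by
        have := (Set.ext_iff.mp hset u).mp (by simp); simpa using this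
      have hv : v = p ∨ v = q := by
        have := (Set.ext_iff.mp hset v).mp (by simp); simpa using this
      rcases hu with h1 | h1 <;> rcases hv with h2 | h2
      · exact absurd (h1.trans h2.symm) hne
      · rw [h1, h2]; exact hpq
      · rw [h1, h2]; exact hpq.symm
      · exact absurd (h1.trans h2.symm) hne
    have notpair : ∀ {u v : V}, u ≠ v → ¬ G.Adj u v → ¬ IsEdgePair G {u, v} :=
      fun hne hna hp => hna (pair_adj hne hp)
    have line_edge : ∀ {u v p q : V}, G.Adj u v → G.Adj p q →
        lineOf d (f u) (f v) = lineOf d (f p) (f q) :=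
      fun huv hpq => (hiff _ _ _ _ huv.ne hpq.ne).mpr
        (Or.inl ⟨⟨_, _, huv, rfl⟩, ⟨_, _, hpq, rfl⟩⟩)
    have line_non : ∀ {u v p q : V}, u ≠ v → ¬ G.Adj u v → p ≠ q → ¬ G.Adj p q →
        lineOf d (f u) (f v) = lineOf d (f p) (f q) :=
      fun h1 h2 h3 h4 => (hiff _ _ _ _ h1 h3).mpr
        (Or.inr ⟨notpair h1 h2, notpair h3 h4⟩)
    -- every triple of points of V is collinear in W
    have hcol : ∀ a b c : V, a ≠ b → a ≠ c → b ≠ c →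
        ({f a, f b, f c} : Set W) ∈ metricEdges d := by
      intro a b c hab hac hbc
      by_cases hadj : G.Adj a b
      · by_cases hcn : ∃ w, G.Adj c w
        · obtain ⟨w, hcw⟩ := hcn
          have hc : f c ∈ lineOf d (f a) (f b) := by
            rw [← line_edge hcw hadj]
            exact mem_lineOf.mpr (Or.inl rfl)
          rcases mem_lineOf.mp hc with h | h | h
          · exact absurd (hf h) hac.symm
          · exact absurd (hf h) hbc.symm
          · exact h
        · push_neg at hcn
          have h1 : ¬ G.Adj b c := fun h => hcn b h.symm
          have h2 : ¬ G.Adj a c := fun h => hcn a h.symm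
          have hb' : f b ∈ lineOf d (f a) (f c) := by
            rw [← line_non hbc h1 hac h2]
            exact mem_lineOf.mpr (Or.inl rfl)
          rcases mem_lineOf.mp hb' with h | h | h
          · exact absurd (hf h) hab.symm
          · exact absurd (hf h) hbc
          · rw [triple_perm (by tauto : ∀ t : W,
              (t = f a ∨ t = f b ∨ t = f c) ↔ (t = f a ∨ t = f c ∨ t = f b))]
            exact h
      · by_cases hcn : ∃ w, w ≠ c ∧ ¬ G.Adj c w
        · obtain ⟨w, hwc, hcw⟩ := hcn
          have hc : f c ∈ lineOf d (f a) (f b) := by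
            rw [← line_non (Ne.symm hwc) hcw hab hadj]
            exact mem_lineOf.mpr (Or.inl rfl)
          rcases mem_lineOf.mp hc with h | h | h
          · exact absurd (hf h) hac.symm
          · exact absurd (hf h) hbc.symm
          · exact h
        · push_neg at hcn
          have hca : G.Adj c a := hcn a hac
          have hcb : G.Adj c b := hcn b hbc
          have hb' : f b ∈ lineOf d (f a) (f c) := by
            rw [← line_edge hcb.symm hca.symm]
            exact mem_lineOf.mpr (Or.inl rfl)
          rcases mem_lineOf.mp hb' with h | h | h
          · exact absurd (hf h) hab.symm
          · exact absurd (hf h) hbc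
          · rw [triple_perm (by tauto : ∀ t : W,
              (t = f a ∨ t = f b ∨ t = f c) ↔ (t = f a ∨ t = f c ∨ t = f b))]
            exact h
    -- a point off a line of a pair is not in the image of f
    have hnotrange : ∀ {p q : V}, p ≠ q → ∀ {z : W},
        z ∉ lineOf d (f p) (f q) → ∀ t, z ≠ f t := by
      intro p q hpq z hz t ht
      subst ht
      apply hz
      by_cases htp : t = p
      · subst htp; exact mem_lineOf.mpr (Or.inl rfl)
      · by_cases htq : t = q
        · subst htq; exact mem_lineOf.mpr (Or.inr (Or.inl rfl))
        · exact mem_lineOf.mpr (Or.inr (Or.inr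
            (hcol p q t hpq (fun h => htp h.symm) (fun h => htq h.symm))))
    by_cases hE : ∃ u v, G.Adj u v
    · by_cases hNE : ∃ u v, u ≠ v ∧ ¬ G.Adj u v
      · -- main case: G has an edge and a non-edge
        obtain ⟨p₀, q₀, hpq⟩ := hE
        obtain ⟨r₀, s₀, hrs_ne, hrs⟩ := hNE
        have hLN : lineOf d (f p₀) (f q₀) ≠ lineOf d (f r₀) (f s₀) := by
          intro h
          rcases (hiff p₀ q₀ r₀ s₀ hpq.ne hrs_ne).mp h with ⟨_, hpair⟩ | ⟨hnp, _⟩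
          · exact hrs (pair_adj hrs_ne hpair)
          · exact hnp ⟨p₀, q₀, hpq, rfl⟩
        have hzex : ∃ z, (z ∈ lineOf d (f p₀) (f q₀) ∧ z ∉ lineOf d (f r₀) (f s₀)) ∨
            (z ∈ lineOf d (f r₀) (f s₀) ∧ z ∉ lineOf d (f p₀) (f q₀)) := by
          by_contra hcon
          push_neg at hcon
          exact hLN (Set.ext fun t => ⟨fun h => (hcon t).1 h, fun h => (hcon t).2 h⟩)
        rcases hzex with ⟨z, ⟨hzL, hzN⟩ | ⟨hzN, hzL⟩⟩
        · -- z is on the edge-line, off the nonedge-line : basedOn G is metric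
          have hzr : ∀ t, z ≠ f t := hnotrange hrs_ne hzN
          obtain ⟨d₁, hmd₁, hEdges⟩ := pullback_edges hm hf hzr
          apply h1
          refine ⟨d₁, hmd₁, ?_⟩
          rw [hEdges]
          ext s
          constructor
          · rintro (⟨u, v, w, huv, huw, hvw, rfl⟩ | ⟨u, v, hadj, rfl⟩)
            · exact Or.inl ⟨u, v, w, huv, huw, hvw, rfl, hcol u v w huv huw hvw⟩
            · refine Or.inr ⟨u, v, hadj.ne, rfl, ?_⟩
              have hzm : z ∈ lineOf d (f u) (f v) := by
                rw [line_edge hadj hpq]; exact hzL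
              rcases mem_lineOf.mp hzm with h | h | h
              · exact absurd h (hzr u)
              · exact absurd h (hzr v)
              · exact h
          · rintro (⟨u, v, w, huv, huw, hvw, rfl, _⟩ | ⟨u, v, huv, rfl, hmem⟩)
            · exact Or.inl ⟨u, v, w, huv, huw, hvw, rfl⟩
            · by_cases hadj : G.Adj u v
              · exact Or.inr ⟨u, v, hadj, rfl⟩
              · exfalso
                apply hzN
                rw [← line_non huv hadj hrs_ne hrs]
                exact mem_lineOf.mpr (Or.inr (Or.inr hmem))
        · -- z is on the nonedge-line, off the edge-line : basedOn Gᶜ is metric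
          have hzr : ∀ t, z ≠ f t := hnotrange hpq.ne hzL
          obtain ⟨d₁, hmd₁, hEdges⟩ := pullback_edges hm hf hzr
          apply h2
          refine ⟨d₁, hmd₁, ?_⟩
          rw [hEdges]
          ext s
          constructor
          · rintro (⟨u, v, w, huv, huw, hvw, rfl⟩ | ⟨u, v, hadj, rfl⟩)
            · exact Or.inl ⟨u, v, w, huv, huw, hvw, rfl, hcol u v w huv huw hvw⟩
            · obtain ⟨hne, hnadj⟩ := (SimpleGraph.compl_adj G u v).mp hadj
              refine Or.inr ⟨u, v, hne, rfl, ?_⟩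
              have hzm : z ∈ lineOf d (f u) (f v) := by
                rw [line_non hne hnadj hrs_ne hrs]; exact hzN
              rcases mem_lineOf.mp hzm with h | h | h
              · exact absurd h (hzr u)
              · exact absurd h (hzr v)
              · exact h
          · rintro (⟨u, v, w, huv, huw, hvw, rfl, _⟩ | ⟨u, v, huv, rfl, hmem⟩)
            · exact Or.inl ⟨u, v, w, huv, huw, hvw, rfl⟩
            · by_cases hadj : G.Adj u v
              · exfalso
                apply hzL
                rw [← line_edge hadj hpq]
                exact mem_lineOf.mpr (Or.inr (Or.inr hmem))
              · exact Or.inr ⟨u, v, (SimpleGraph.compl_adj G u v).mpr ⟨huv, hadj⟩, rfl⟩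
      · -- G is complete: basedOn Gᶜ consists of the triples of V only
        push_neg at hNE
        obtain ⟨d₂, hmd₂, hEdges⟩ := triples_metric hm hf v₀ hcol
        apply h2
        refine ⟨d₂, hmd₂, ?_⟩
        rw [hEdges]
        ext s
        constructor
        · rintro (h | ⟨u, v, hadj, rfl⟩)
          · exact h
          · obtain ⟨hne, hnadj⟩ := (SimpleGraph.compl_adj G u v).mp hadj
            exact absurd (hNE u v hne) hnadj
        · intro h
          exact Or.inl h
    · -- G has no edges: basedOn G consists of the triples of V only
      push_neg at hE
      obtain ⟨d₂, hmd₂, hEdges⟩ := triples_metric hm hf v₀ hcol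
      apply h1
      refine ⟨d₂, hmd₂, ?_⟩
      rw [hEdges]
      ext s
      constructor
      · rintro (h | ⟨u, v, hadj, rfl⟩)
        · exact h
        · exact absurd hadj (hE u v)
      · intro h
        exact Or.inl h
end

section
/- Let M be a metric space on ground set V ∪ {x}, where x ∉ V and V = {0,1,...,n−1}, and assume [uvw] holds whenever 0 ≤ u < v < w < n. If i < k, [i x k], j < k and [x j k], then i < j and [i x j]. -/
universe u

/-- With `V = {0,…,n-1}` linearly placed in a metric space on `V ∪ {x}`:
if `i < k`, `[i x k]`, `j < k` and `[x j k]`, then `i < j` and `[i x j]`. -/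
theorem stmt_12 (n : ℕ) (d : Option (Fin n) → Option (Fin n) → ℝ)
    (hd : IsMetric d)
    (hlin : ∀ u v w : Fin n, u < v → v < w → MBtw d (some u) (some v) (some w))
    (i j k : Fin n) (hik : i < k) (h1 : MBtw d (some i) none (some k))
    (hjk : j < k) (h2 : MBtw d none (some j) (some k)) :
    i < j ∧ MBtw d (some i) none (some j) := by
  obtain ⟨_, _, _, e1⟩ := h1
  obtain ⟨_, _, _, e2⟩ := h2
  have nonneg : ∀ a b, (0:ℝ) ≤ d a b := by
    intro a b
    have h0 : d a a = 0 := (hd.eq_iff a a).2 rfl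
    have ht := hd.triangle a b a
    have hs := hd.symm a b
    linarith
  have tri1 := hd.triangle (some i) none (some j)
  have tri2 := hd.triangle (some i) (some j) (some k)
  have eij : d (some i) none + d none (some j) = d (some i) (some j) := by
    linarith
  have eik : d (some i) (some j) + d (some j) (some k) = d (some i) (some k) := by
    linarith
  have hnij : d (some i) (some j) ≠ 0 := by
    intro h0
    have h1 := nonneg (some i) none
    have h2 := nonneg none (some j)
    have : d (some i) none = 0 := by linarith
    exact (Option.some_ne_none i) ((hd.eq_iff _ _).1 this)
  have hij : i ≠ j := fun h => hnij (by rw [h]; exact (hd.eq_iff _ _).2 rfl)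
  have hlt : i < j := by
    rcases lt_trichotomy i j with h | h | h
    · exact h
    · exact absurd h hij
    · obtain ⟨_, _, _, e3⟩ := hlin j i k h hik
      have hs := hd.symm (some i) (some j)
      exact absurd (by linarith : d (some i) (some j) = 0) hnij
  exact ⟨hlt, Option.some_ne_none i, fun h => hij (Option.some_injective _ h),
    (Option.some_ne_none j).symm, eij⟩
end

section
/- Let M be a metric space on ground set V ∪ {x}, where x ∉ V and V = {0,1,...,n−1}, and assume [uvw] holds whenever 0 ≤ u < v < w < n. If i < k, [i x k], i < j and [i j x], then j < k and [j x k]. -/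
universe u

/-- With `V = {0,…,n-1}` linearly placed in a metric space on `V ∪ {x}`:
if `i < k`, `[i x k]`, `i < j` and `[i j x]`, then `j < k` and `[j x k]`. -/
theorem stmt_13 (n : ℕ) (d : Option (Fin n) → Option (Fin n) → ℝ)
    (hd : IsMetric d)
    (hlin : ∀ u v w : Fin n, u < v → v < w → MBtw d (some u) (some v) (some w))
    (i j k : Fin n) (hik : i < k) (h1 : MBtw d (some i) none (some k))
    (hij : i < j) (h2 : MBtw d (some i) (some j) none) :
    j < k ∧ MBtw d (some j) none (some k) := by
  obtain ⟨hix, hik', hxk, e1⟩ := h1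
  obtain ⟨hij', hinone, hjx, e2⟩ := h2
  have nonneg : ∀ x y, 0 ≤ d x y := by
    intro x y
    have h := hd.triangle x y x
    have h2 := (hd.eq_iff x x).2 rfl
    have hs := hd.symm x y
    linarith
  have pos : ∀ x y, x ≠ y → 0 < d x y := by
    intro x y h
    rcases lt_or_eq_of_le (nonneg x y) with h' | h'
    · exact h'
    · exact absurd ((hd.eq_iff x y).1 h'.symm) h
  have hxk' := pos _ _ hxk
  have hjx' := pos _ _ hjx
  have hjk : j ≠ k := by
    rintro rfl
    have hs := hd.symm none (some j)
    linarith
  have hjklt : j < k := by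
    rcases lt_trichotomy j k with h | h | h
    · exact h
    · exact absurd h hjk
    · obtain ⟨_, _, hkj, e3⟩ := hlin i k j hik h
      have := pos _ _ hkj
      linarith
  refine ⟨hjklt, hjx, ?_, hxk, ?_⟩
  · simpa using hjk
  · have t1 := hd.triangle (some j) none (some k)
    have t2 := hd.triangle (some i) (some j) (some k)
    linarith
end

section
/- The 3-uniform hypergraph based on the cycle C_4 is metric. -/
universe u

-- auxiliary
def gg (i j : Fin 4) : ℝ :=
  if i = j then 0 else if j = i + 2 then 2 else 1
def hh (i : Fin 4) : ℝ := if i = 0 ∨ i = 2 then 2 else 3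

def dd : Option (Fin 4) → Option (Fin 4) → ℝ
  | none, none => 0
  | none, some i => hh i
  | some i, none => hh i
  | some i, some j => gg i j

lemma dd_metric : IsMetric dd := by
  constructor
  · rintro (_|i) (_|j)
    · simp [dd]
    · fin_cases j <;> simp +decide [dd, hh] <;> norm_num
    · fin_cases i <;> simp +decide [dd, hh] <;> norm_num
    · fin_cases i <;> fin_cases j <;> simp_all +decide [dd, gg] <;> norm_num
  · rintro (_|i) (_|j) <;> simp only [dd]
    fin_cases i <;> fin_cases j <;> simp +decide [gg] <;> norm_num
  · rintro (_|x) (_|y) (_|z) <;> simp only [dd] <;>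
      (try fin_cases x) <;> (try fin_cases y) <;> (try fin_cases z) <;>
        simp +decide [gg, hh] <;> norm_num

lemma btw_some (u v w : Fin 4) (h1 : u ≠ v) (h2 : u ≠ w) (h3 : v ≠ w) :
    ({some u, some v, some w} : Set (Option (Fin 4))) ∈ metricEdges dd := by
  have key : gg u v + gg v w = gg u w ∨ gg v u + gg u w = gg v w ∨
      gg u w + gg w v = gg u v := by
    fin_cases u <;> fin_cases v <;> fin_cases w <;>
      first
        | (exact absurd rfl h1) | (exact absurd rfl h2) | (exact absurd rfl h3)
        | (simp +decide [gg] <;> norm_num)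
  rcases key with k | k | k
  · exact ⟨some u, some v, some w, rfl, by simp [MBtw, dd, h1, h2, h3, k]⟩
  · exact ⟨some v, some u, some w, Set.insert_comm _ _ _,
      by simp [MBtw, dd, h1.symm, h2, h3, k]⟩
  · exact ⟨some u, some w, some v, congrArg _ (Set.pair_comm _ _),
      by simp [MBtw, dd, h1, h2, h3.symm, k]⟩

lemma key_adj (a b : Fin 4) (hab : a ≠ b)
    (h : hh a + gg a b = hh b ∨ gg a b + hh b = hh a ∨ hh a + hh b = gg a b) :
    (SimpleGraph.cycleGraph 4).Adj a b := by
  fin_cases a <;> fin_cases b <;>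
    first
      | (exact absurd rfl hab)
      | decide
      | (exfalso; revert h; simp +decide [hh, gg]; try norm_num)

lemma adj_edge (u v : Fin 4) (h : (SimpleGraph.cycleGraph 4).Adj u v) :
    ({none, some u, some v} : Set (Option (Fin 4))) ∈ metricEdges dd := by
  have hne : u ≠ v := h.ne
  have key : hh u + gg u v = hh v ∨ hh v + gg v u = hh u := by
    fin_cases u <;> fin_cases v <;>
      first
        | (exact absurd h (by decide))
        | (simp +decide [hh, gg] <;> norm_num)
  rcases key with k | k
  · exact ⟨none, some u, some v, rfl, by simp [MBtw, dd, hne, k]⟩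
  · exact ⟨none, some v, some u, congrArg _ (Set.pair_comm _ _),
      by simp [MBtw, dd, hne.symm, k]⟩


/-- The hypergraph based on the cycle `C_4` is metric. -/
theorem stmt_15 : IsMetricHypergraph (basedOn (SimpleGraph.cycleGraph 4)) := by
  refine ⟨dd, dd_metric, ?_⟩
  ext s
  simp only [basedOn, Set.mem_setOf_eq]
  constructor
  · rintro (⟨u, v, w, h1, h2, h3, rfl⟩ | ⟨u, v, h, rfl⟩)
    · exact btw_some u v w h1 h2 h3
    · exact adj_edge u v h
  · rintro ⟨u, v, w, rfl, h1, h2, h3, heq⟩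
    rcases u with _ | a <;> rcases v with _ | b <;> rcases w with _ | c
    · exact absurd rfl h1
    · exact absurd rfl h1
    · exact absurd rfl h2
    · -- none, some b, some c
      refine Or.inr ⟨b, c, key_adj b c (by simpa using h3) (Or.inl ?_), rfl⟩
      simpa [dd] using heq
    · exact absurd rfl h3
    · -- some a, none, some c
      refine Or.inr ⟨a, c, key_adj a c (by simpa using h2) (Or.inr (Or.inr ?_)),
        Set.insert_comm _ _ _⟩
      simpa [dd] using heq
    · -- some a, some b, none
      refine Or.inr ⟨a, b, key_adj a b (by simpa using h1) (Or.inr (Or.inl ?_)),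
        ((congrArg _ (Set.pair_comm _ _)).trans (Set.insert_comm _ _ _))⟩
      simpa [dd] using heq
    · exact Or.inl ⟨a, b, c, by simpa using h1, by simpa using h2, by simpa using h3, rfl⟩
end

section
/- For every integer m ≥ 1, the 3-uniform hypergraph based on the path P_m on m vertices is metric. -/
universe u

noncomputable def pd (m : ℕ) : Option (Fin m) → Option (Fin m) → ℝ
  | none, none => 0
  | none, some i => m + (i.val % 2 : ℕ)
  | some i, none => m + (i.val % 2 : ℕ)
  | some i, some j => |(i.val : ℝ) - (j.val : ℝ)|

lemma one_le_abs_nat {a b : ℕ} (h : a ≠ b) : (1:ℝ) ≤ |(a:ℝ) - b| := by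
  rcases abs_cases ((a:ℝ) - b) with ⟨he, hs⟩ | ⟨he, hs⟩ <;> rw [he]
  · have hba : b < a := by
      rcases Nat.lt_or_ge b a with h' | h'
      · exact h'
      · exfalso
        have : (a:ℝ) ≤ b := by exact_mod_cast h'
        rcases Nat.lt_or_ge a b with h'' | h''
        · have : (a:ℝ) < b := by exact_mod_cast h''
          have : ¬ ((0:ℝ) ≤ (a:ℝ) - b) := by linarith
          exact this hs
        · exact h (le_antisymm h' h'')
    have : (b:ℝ) + 1 ≤ a := by exact_mod_cast hba
    linarith
  · have hab : a < b := by
      rcases Nat.lt_or_ge a b with h' | h'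
      · exact h'
      · exfalso
        have : (b:ℝ) ≤ a := by exact_mod_cast h'
        linarith
    have : (a:ℝ) + 1 ≤ b := by exact_mod_cast hab
    linarith

lemma mod2_le_one (a : ℕ) : ((a % 2 : ℕ) : ℝ) ≤ 1 := by
  have : a % 2 ≤ 1 := by omega
  exact_mod_cast this

lemma pd_pos_aux (m : ℕ) (hm : 1 ≤ m) (i : Fin m) : (0:ℝ) < m + (i.val % 2 : ℕ) := by
  have h1 : (1:ℝ) ≤ m := by exact_mod_cast hm
  have h2 : (0:ℝ) ≤ ((i.val % 2 : ℕ) : ℝ) := Nat.cast_nonneg _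
  linarith

lemma pd_isMetric (m : ℕ) (hm : 1 ≤ m) : IsMetric (pd m) := by
  constructor
  · rintro (_|i) (_|j)
    · simp [pd]
    · simp only [pd]
      constructor
      · intro h; exact absurd h (pd_pos_aux m hm j).ne'
      · intro h; exact absurd h (by simp)
    · simp only [pd]
      constructor
      · intro h; exact absurd h (pd_pos_aux m hm i).ne'
      · intro h; exact absurd h (by simp)
    · simp only [pd, abs_eq_zero, sub_eq_zero, Option.some.injEq]
      constructor
      · intro h; exact Fin.ext (by exact_mod_cast h)
      · intro h; rw [h]
  · rintro (_|i) (_|j) <;> simp only [pd]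
    exact abs_sub_comm _ _
  · rintro (_|i) (_|j) (_|k) <;> simp only [pd]
    · linarith
    · linarith
    · have := pd_pos_aux m hm j
      linarith
    · -- m + k%2 ≤ (m + j%2) + |j - k|
      rcases eq_or_ne j k with rfl | hne
      · simp
      · have h1 : (1:ℝ) ≤ |(j.val:ℝ) - k.val| := one_le_abs_nat (fun h => hne (Fin.ext h))
        have h2 := mod2_le_one k.val
        have h3 : (0:ℝ) ≤ ((j.val % 2 : ℕ) : ℝ) := Nat.cast_nonneg _
        linarith
    · linarith
    · -- |i - k| ≤ (m + i%2) + (m + k%2)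
      have hi : (i.val:ℝ) < m := by exact_mod_cast i.isLt
      have hk : (k.val:ℝ) < m := by exact_mod_cast k.isLt
      have h3 : (0:ℝ) ≤ ((i.val % 2 : ℕ) : ℝ) := Nat.cast_nonneg _
      have h4 : (0:ℝ) ≤ ((k.val % 2 : ℕ) : ℝ) := Nat.cast_nonneg _
      have hi0 : (0:ℝ) ≤ (i.val:ℝ) := Nat.cast_nonneg _
      have hk0 : (0:ℝ) ≤ (k.val:ℝ) := Nat.cast_nonneg _
      rcases abs_cases ((i.val:ℝ) - k.val) with ⟨he, hs⟩ | ⟨he, hs⟩ <;> rw [he] <;> linarith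
    · -- m + i%2 ≤ |i - j| + (m + j%2)
      rcases eq_or_ne i j with rfl | hne
      · simp
      · have h1 : (1:ℝ) ≤ |(i.val:ℝ) - j.val| := one_le_abs_nat (fun h => hne (Fin.ext h))
        have h2 := mod2_le_one i.val
        have h3 : (0:ℝ) ≤ ((j.val % 2 : ℕ) : ℝ) := Nat.cast_nonneg _
        linarith
    · exact abs_sub_le _ _ _
lemma sorted_mbtw (m : ℕ) (a b c : Fin m) (h1 : a < b) (h2 : b < c) :
    MBtw (pd m) (some a) (some b) (some c) := by
  have hA : (a.val:ℝ) < b.val := by exact_mod_cast h1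
  have hB : (b.val:ℝ) < c.val := by exact_mod_cast h2
  refine ⟨by simp [h1.ne], by simp [(h1.trans h2).ne], by simp [h2.ne], ?_⟩
  simp only [pd]
  rw [abs_of_neg (by linarith), abs_of_neg (by linarith), abs_of_neg (by linarith)]
  ring

lemma triple_mem (m : ℕ) (u v w : Fin m) (h1 : u ≠ v) (h2 : u ≠ w) (h3 : v ≠ w) :
    ({some u, some v, some w} : Set (Option (Fin m))) ∈ metricEdges (pd m) := by
  have perm : ∀ a b c : Fin m, a < b → b < c →
      ({some u, some v, some w} : Set (Option (Fin m))) = {some a, some b, some c} →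
      ({some u, some v, some w} : Set (Option (Fin m))) ∈ metricEdges (pd m) := by
    intro a b c ha hb hset
    exact ⟨some a, some b, some c, hset, sorted_mbtw m a b c ha hb⟩
  rcases lt_trichotomy u v with huv | huv | huv
  · rcases lt_trichotomy v w with hvw | hvw | hvw
    · exact perm u v w huv hvw rfl
    · exact absurd hvw h3
    · rcases lt_trichotomy u w with huw | huw | huw
      · exact perm u w v huw hvw (by ext t; simp only [Set.mem_insert_iff, Set.mem_singleton_iff]; tauto)
      · exact absurd huw h2
      · exact perm w u v huw huv (by ext t; simp only [Set.mem_insert_iff, Set.mem_singleton_iff]; tauto)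
  · exact absurd huv h1
  · rcases lt_trichotomy u w with huw | huw | huw
    · exact perm v u w huv huw (by ext t; simp only [Set.mem_insert_iff, Set.mem_singleton_iff]; tauto)
    · exact absurd huw h2
    · rcases lt_trichotomy v w with hvw | hvw | hvw
      · exact perm v w u hvw huw (by ext t; simp only [Set.mem_insert_iff, Set.mem_singleton_iff]; tauto)
      · exact absurd hvw h3
      · exact perm w v u hvw huv (by ext t; simp only [Set.mem_insert_iff, Set.mem_singleton_iff]; tauto)

lemma edge_mem (m : ℕ) (a b : Fin m) (h : a.val + 1 = b.val) :
    ({none, some a, some b} : Set (Option (Fin m))) ∈ metricEdges (pd m) := by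
  have hab : a ≠ b := by intro hh; rw [hh] at h; omega
  have hB : (b.val:ℝ) = (a.val:ℝ) + 1 := by exact_mod_cast h.symm
  have habs1 : |(a.val:ℝ) - b.val| = 1 := by rw [hB]; rw [abs_of_neg (by linarith)]; ring
  have habs2 : |(b.val:ℝ) - a.val| = 1 := by rw [hB]; rw [abs_of_pos (by linarith)]; ring
  rcases Nat.even_or_odd a.val with hpar | hpar
  · have ha2 : a.val % 2 = 0 := Nat.even_iff.mp hpar
    have hb2 : b.val % 2 = 1 := by omega
    refine ⟨none, some a, some b, rfl, by simp, by simp, by simp [hab], ?_⟩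
    simp only [pd, ha2, hb2, habs1]
    push_cast
    ring
  · have ha2 : a.val % 2 = 1 := Nat.odd_iff.mp hpar
    have hb2 : b.val % 2 = 0 := by omega
    refine ⟨none, some b, some a,
      by ext t; simp only [Set.mem_insert_iff, Set.mem_singleton_iff]; tauto,
      by simp, by simp, by simp [hab.symm], ?_⟩
    simp only [pd, ha2, hb2, habs2]
    push_cast
    ring

lemma abs_adj (m : ℕ) {a b : Fin m} (h : |(a.val:ℝ) - b.val| = 1) :
    a.val + 1 = b.val ∨ b.val + 1 = a.val := by
  rcases abs_cases ((a.val:ℝ) - b.val) with ⟨he, _⟩ | ⟨he, _⟩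
  · right
    have : (a.val:ℝ) = b.val + 1 := by rw [h] at he; linarith
    exact_mod_cast this.symm
  · left
    have : (b.val:ℝ) = a.val + 1 := by rw [h] at he; linarith
    exact_mod_cast this.symm

/-- For every `m ≥ 1`, the hypergraph based on the path `P_m` is metric. -/
theorem stmt_16 (m : ℕ) (hm : 1 ≤ m) :
    IsMetricHypergraph (basedOn (SimpleGraph.pathGraph m)) := by
  refine ⟨pd m, pd_isMetric m hm, ?_⟩
  ext s
  constructor
  · rintro (⟨u, v, w, h1, h2, h3, rfl⟩ | ⟨u, v, hadj, rfl⟩)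
    · exact triple_mem m u v w h1 h2 h3
    · rw [SimpleGraph.pathGraph_adj] at hadj
      rcases hadj with h | h
      · exact edge_mem m u v h
      · have := edge_mem m v u h
        have hset : ({none, some u, some v} : Set (Option (Fin m))) = {none, some v, some u} := by
          ext t; simp only [Set.mem_insert_iff, Set.mem_singleton_iff]; tauto
        rw [hset]; exact this
  · rintro ⟨u, v, w, rfl, hne1, hne2, hne3, heq⟩
    match u, v, w with
    | none, none, _ => exact absurd rfl hne1
    | some a, none, none => exact absurd rfl hne3
    | none, some a, none => exact absurd rfl hne2
    | some a, some b, some c =>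
      exact Or.inl ⟨a, b, c, by simpa using hne1, by simpa using hne2, by simpa using hne3, rfl⟩
    | some a, none, some b =>
      -- impossible: (m+pa)+(m+pb) = |A-B|
      exfalso
      simp only [pd] at heq
      have hAm : (a.val:ℝ) < m := by exact_mod_cast a.isLt
      have hBm : (b.val:ℝ) < m := by exact_mod_cast b.isLt
      have hA0 : (0:ℝ) ≤ (a.val:ℝ) := Nat.cast_nonneg _
      have hB0 : (0:ℝ) ≤ (b.val:ℝ) := Nat.cast_nonneg _
      have hpa : (0:ℝ) ≤ ((a.val % 2 : ℕ):ℝ) := Nat.cast_nonneg _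
      have hpb : (0:ℝ) ≤ ((b.val % 2 : ℕ):ℝ) := Nat.cast_nonneg _
      have hm' : (1:ℝ) ≤ m := by exact_mod_cast hm
      rcases abs_cases ((a.val:ℝ) - b.val) with ⟨he, _⟩ | ⟨he, _⟩ <;> rw [he] at heq <;> linarith
    | none, some a, some b =>
      -- (m+pa) + |A-B| = m+pb
      right
      have hab : a ≠ b := by simpa using hne3
      have h1 : (1:ℝ) ≤ |(a.val:ℝ) - b.val| :=
        one_le_abs_nat (fun hh => hab (Fin.ext hh))
      have hle : |(a.val:ℝ) - b.val| ≤ 1 := by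
        simp only [pd] at heq
        have h2 := mod2_le_one b.val
        have hpa : (0:ℝ) ≤ ((a.val % 2 : ℕ):ℝ) := Nat.cast_nonneg _
        linarith
      have habs : |(a.val:ℝ) - b.val| = 1 := le_antisymm hle h1
      refine ⟨a, b, SimpleGraph.pathGraph_adj.mpr (abs_adj m habs), rfl⟩
    | some a, some b, none =>
      -- |A-B| + (m+pb) = m+pa
      right
      have hab : a ≠ b := by simpa using hne1
      have h1 : (1:ℝ) ≤ |(a.val:ℝ) - b.val| :=
        one_le_abs_nat (fun hh => hab (Fin.ext hh))
      have hle : |(a.val:ℝ) - b.val| ≤ 1 := by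
        simp only [pd] at heq
        have h2 := mod2_le_one a.val
        have hpb : (0:ℝ) ≤ ((b.val % 2 : ℕ):ℝ) := Nat.cast_nonneg _
        linarith
      have habs : |(a.val:ℝ) - b.val| = 1 := le_antisymm hle h1
      refine ⟨a, b, SimpleGraph.pathGraph_adj.mpr (abs_adj m habs),
        by ext t; simp only [Set.mem_insert_iff, Set.mem_singleton_iff]; tauto⟩
end

section
/- There exist infinitely many pairwise non-isomorphic minimal non-metric 3-uniform hypergraphs; in particular, for every even integer n greater than four there is a minimal non-metric 3-uniform hypergraph on n+1 vertices. -/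
universe u

def cycAdj (n a b : ℕ) : Prop :=
  b = a + 1 ∨ a = b + 1 ∨ (a = 0 ∧ b = n - 1) ∨ (b = 0 ∧ a = n - 1)

def cycE (n : ℕ) : Set (Set (Fin (n+1))) :=
  {s | (∃ u v w : Fin (n+1), u.val < n ∧ v.val < n ∧ w.val < n ∧
          u ≠ v ∧ u ≠ w ∧ v ≠ w ∧ s = {u, v, w}) ∨
       (∃ u v : Fin (n+1), u.val < n ∧ v.val < n ∧ cycAdj n u.val v.val ∧
          s = {⟨n, Nat.lt_succ_self n⟩, u, v})}

lemma abs3 {a b c : ℝ} (h1 : a ≤ b) (h2 : b ≤ c) : |a - b| + |b - c| = |a - c| := by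
  rw [abs_of_nonpos (by linarith), abs_of_nonpos (by linarith), abs_of_nonpos (by linarith)]; ring

lemma line_triple {β : Type*} (dd : β → β → ℝ) (p : β → ℝ) (u v w : β)
    (h : ∀ a b, a ∈ ({u,v,w} : Set β) → b ∈ ({u,v,w} : Set β) → dd a b = |p a - p b|)
    (hpuv : p u ≠ p v) (hpuw : p u ≠ p w) (hpvw : p v ≠ p w) :
    ∃ a b c, ({a,b,c} : Set β) = {u,v,w} ∧ MBtw dd a b c := by
  have mu : u ∈ ({u,v,w} : Set β) := by simp
  have mv : v ∈ ({u,v,w} : Set β) := by simp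
  have mw : w ∈ ({u,v,w} : Set β) := by simp
  have huv : u ≠ v := fun e => hpuv (by rw [e])
  have huw : u ≠ w := fun e => hpuw (by rw [e])
  have hvw : v ≠ w := fun e => hpvw (by rw [e])
  rcases le_total (p u) (p v) with h1 | h1 <;> rcases le_total (p v) (p w) with h2 | h2 <;>
    rcases le_total (p u) (p w) with h3 | h3
  · exact ⟨u, v, w, rfl, huv, huw, hvw, by
      rw [h u v mu mv, h v w mv mw, h u w mu mw]; exact abs3 h1 h2⟩
  · exact ⟨u, v, w, rfl, huv, huw, hvw, by
      rw [h u v mu mv, h v w mv mw, h u w mu mw]; exact abs3 h1 h2⟩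
  · exact ⟨u, w, v, by ext z; simp; tauto, huw, huv, fun e => hvw e.symm, by
      rw [h u w mu mw, h w v mw mv, h u v mu mv]; exact abs3 h3 h2⟩
  · exact ⟨w, u, v, by ext z; simp; tauto, fun e => huw e.symm, fun e => hvw e.symm, huv, by
      rw [h w u mw mu, h u v mu mv, h w v mw mv]; exact abs3 h3 h1⟩
  · exact ⟨v, u, w, by ext z; simp; tauto, fun e => huv e.symm, hvw, huw, by
      rw [h v u mv mu, h u w mu mw, h v w mv mw]; exact abs3 h1 h3⟩
  · exact ⟨v, w, u, by ext z; simp; tauto, hvw, fun e => huv e.symm, fun e => huw e.symm, by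
      rw [h v w mv mw, h w u mw mu, h v u mv mu]; exact abs3 h2 h3⟩
  · exact absurd (le_antisymm h3 (le_trans h2 h1)) hpuw
  · exact ⟨w, v, u, by ext z; simp; tauto, fun e => hvw e.symm, fun e => huw e.symm,
      fun e => huv e.symm, by
      rw [h w v mw mv, h v u mv mu, h w u mw mu]; exact abs3 h2 h1⟩

lemma preimage_triple {V : Type*} {U : Set V} {s : Set U} {u v w : V}
    (h : Subtype.val '' s = {u, v, w}) :
    ∃ u' v' w' : U, ↑u' = u ∧ ↑v' = v ∧ ↑w' = w ∧ s = {u', v', w'} := by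
  have hu : u ∈ Subtype.val '' s := by rw [h]; simp
  obtain ⟨u', hu's, hu'⟩ := hu
  have hv : v ∈ Subtype.val '' s := by rw [h]; simp
  obtain ⟨v', hv's, hv'⟩ := hv
  have hw : w ∈ Subtype.val '' s := by rw [h]; simp
  obtain ⟨w', hw's, hw'⟩ := hw
  refine ⟨u', v', w', hu', hv', hw', ?_⟩
  ext z
  constructor
  · intro hz
    have hzm : (z : V) ∈ Subtype.val '' s := ⟨z, hz, rfl⟩
    rw [h] at hzm
    simp only [Set.mem_insert_iff, Set.mem_singleton_iff] at hzm ⊢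
    rcases hzm with e | e | e
    · left; exact Subtype.ext (by rw [e, ← hu'])
    · right; left; exact Subtype.ext (by rw [e, ← hv'])
    · right; right; exact Subtype.ext (by rw [e, ← hw'])
  · intro hz
    simp only [Set.mem_insert_iff, Set.mem_singleton_iff] at hz
    rcases hz with rfl | rfl | rfl <;> assumption

lemma one_le_abs_sub {a b : ℕ} (h : a ≠ b) : (1:ℝ) ≤ |(a:ℝ) - (b:ℝ)| := by
  rcases Nat.lt_or_ge a b with h' | h'
  · have hc : (a:ℝ) + 1 ≤ (b:ℝ) := by exact_mod_cast h'
    rw [abs_sub_comm, abs_of_nonneg (by linarith)]; linarith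
  · have h'' : b < a := by omega
    have hc : (b:ℝ) + 1 ≤ (a:ℝ) := by exact_mod_cast h''
    rw [abs_of_nonneg (by linarith)]; linarith

lemma abs_sub_eq_one {a b : ℕ} (h : |(a:ℝ) - (b:ℝ)| = 1) : b = a + 1 ∨ a = b + 1 := by
  rcases le_total ((a:ℝ)) ((b:ℝ)) with h' | h'
  · left
    have hc : (b:ℝ) = (a:ℝ) + 1 := by rw [abs_sub_comm, abs_of_nonneg (by linarith)] at h; linarith
    exact_mod_cast hc
  · right
    have hc : (a:ℝ) = (b:ℝ) + 1 := by rw [abs_of_nonneg (by linarith)] at h; linarith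
    exact_mod_cast hc

lemma goal3 (n : ℕ) (h4 : 4 < n) :
    ∀ U : Set (Fin (n+1)), U ≠ Set.univ → IsMetricHypergraph (inducedEdges (cycE n) U) := by
  intro U hU
  obtain ⟨m, hm⟩ := (Set.ne_univ_iff_exists_notMem U).mp hU
  set x : Fin (n+1) := ⟨n, Nat.lt_succ_self n⟩ with hxdef
  have hxval : x.val = n := rfl
  have hnex : ∀ z : Fin (n+1), z.val < n → z ≠ x := by
    intro z h e
    rw [e, hxval] at h
    omega
  have hxne : ∀ z : Fin (n+1), z ≠ x → z.val < n := by
    intro z h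
    have h2 : z.val ≠ n := fun e => h (Fin.ext (by rw [e, hxval]))
    have := z.isLt
    omega
  by_cases hxU : x ∈ U
  · -- x ∈ U : use m, cycle-path construction
    have hmx : m ≠ x := fun e => hm (e ▸ hxU)
    have hmval : m.val < n := hxne m hmx
    set σ : ℕ → ℕ := fun a => if m.val + 1 ≤ a then a - (m.val + 1) else a + (n - (m.val + 1))
      with hσ
    set F : Fin (n+1) → ℝ := fun z => ((σ z.val : ℕ) : ℝ) with hF
    set G : Fin (n+1) → ℝ := fun z => (n : ℝ) + ((σ z.val % 2 : ℕ) : ℝ) with hG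
    set d : U → U → ℝ := fun u v =>
      if (↑u : Fin (n+1)) = x then (if (↑v : Fin (n+1)) = x then 0 else G ↑v)
      else if (↑v : Fin (n+1)) = x then G ↑u else |F ↑u - F ↑v| with hd
    have hσlt : ∀ a, a < n → a ≠ m.val → σ a ≤ n - 2 := by
      intro a ha hne
      simp only [hσ]
      split_ifs <;> omega
    have hσinj : ∀ a b, a < n → b < n → σ a = σ b → a = b := by
      intro a b ha hb
      simp only [hσ]
      split_ifs <;> omega
    have hadjiff : ∀ a b, a < n → b < n → a ≠ m.val → b ≠ m.val → a ≠ b →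
        (cycAdj n a b ↔ (σ b = σ a + 1 ∨ σ a = σ b + 1)) := by
      intro a b ha hb ham hbm hab
      simp only [hσ, cycAdj]
      split_ifs <;> omega
    have hmem : ∀ z : U, (↑z : Fin (n+1)).val ≠ m.val := by
      intro z e
      exact hm ((Fin.ext e : (↑z : Fin (n+1)) = m) ▸ z.2)
    have hmodb : ∀ z : Fin (n+1), 0 ≤ ((σ z.val % 2 : ℕ) : ℝ) ∧ ((σ z.val % 2 : ℕ) : ℝ) ≤ 1 := by
      intro z
      constructor
      · exact Nat.cast_nonneg _
      · have : σ z.val % 2 ≤ 1 := by omega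
        exact_mod_cast this
    have hGlb : ∀ z : Fin (n+1), (n:ℝ) ≤ G z := by
      intro z
      have := (hmodb z).1
      simp only [hG]
      linarith
    have hGub : ∀ z : Fin (n+1), G z ≤ (n:ℝ) + 1 := by
      intro z
      have := (hmodb z).2
      simp only [hG]
      linarith
    have hF0 : ∀ z : Fin (n+1), 0 ≤ F z := fun z => Nat.cast_nonneg _
    have hFub : ∀ z : Fin (n+1), z.val < n → z.val ≠ m.val → F z ≤ (n:ℝ) - 2 := by
      intro z h1 h2
      have hh := hσlt z.val h1 h2
      have : (σ z.val : ℕ) + 2 ≤ n := by omega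
      have : ((σ z.val : ℕ) : ℝ) + 2 ≤ (n:ℝ) := by exact_mod_cast this
      simp only [hF]
      linarith
    have hFne1 : ∀ z w : Fin (n+1), z.val < n → w.val < n → z ≠ w → 1 ≤ |F z - F w| := by
      intro z w h1 h2 hne
      have hv : z.val ≠ w.val := fun e => hne (Fin.ext e)
      have hσne : σ z.val ≠ σ w.val := fun e => hv (hσinj _ _ h1 h2 e)
      exact one_le_abs_sub hσne
    have dxx : ∀ u v : U, (↑u : Fin (n+1)) = x → (↑v : Fin (n+1)) = x → d u v = 0 := by
      intro u v h1 h2; simp only [hd]; rw [if_pos h1, if_pos h2]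
    have dxA : ∀ u v : U, (↑u : Fin (n+1)) = x → (↑v : Fin (n+1)) ≠ x → d u v = G ↑v := by
      intro u v h1 h2; simp only [hd]; rw [if_pos h1, if_neg h2]
    have dAx : ∀ u v : U, (↑u : Fin (n+1)) ≠ x → (↑v : Fin (n+1)) = x → d u v = G ↑u := by
      intro u v h1 h2; simp only [hd]; rw [if_neg h1, if_pos h2]
    have dAB : ∀ u v : U, (↑u : Fin (n+1)) ≠ x → (↑v : Fin (n+1)) ≠ x →
        d u v = |F ↑u - F ↑v| := by
      intro u v h1 h2; simp only [hd]; rw [if_neg h1, if_neg h2]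
    refine ⟨d, ⟨?_, ?_, ?_⟩, ?_⟩
    · -- eq_iff
      intro u v
      by_cases h1 : (↑u : Fin (n+1)) = x <;> by_cases h2 : (↑v : Fin (n+1)) = x
      · rw [dxx u v h1 h2]
        constructor
        · intro _; exact Subtype.ext (h1.trans h2.symm)
        · intro _; rfl
      · rw [dxA u v h1 h2]
        have h2n : (4:ℝ) < (n:ℝ) := by exact_mod_cast h4
        constructor
        · intro hz; exfalso; have := hGlb ↑v; rw [hz] at this; linarith
        · intro e; exact absurd (by rw [← e]; exact h1) h2
      · rw [dAx u v h1 h2]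
        have h2n : (4:ℝ) < (n:ℝ) := by exact_mod_cast h4
        constructor
        · intro hz; exfalso; have := hGlb ↑u; rw [hz] at this; linarith
        · intro e; exact absurd (by rw [e]; exact h2) h1
      · rw [dAB u v h1 h2]
        constructor
        · intro hz
          have he := abs_eq_zero.mp hz
          have hfe : F ↑u = F ↑v := by linarith
          simp only [hF] at hfe
          have hse : (σ (↑u : Fin (n+1)).val : ℕ) = σ (↑v : Fin (n+1)).val := by exact_mod_cast hfe
          have := hσinj _ _ (hxne _ h1) (hxne _ h2) hse
          exact Subtype.ext (Fin.ext this)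
        · intro e; rw [e]; simp
    · -- symm
      intro u v
      by_cases h1 : (↑u : Fin (n+1)) = x <;> by_cases h2 : (↑v : Fin (n+1)) = x
      · rw [dxx u v h1 h2, dxx v u h2 h1]
      · rw [dxA u v h1 h2, dAx v u h2 h1]
      · rw [dAx u v h1 h2, dxA v u h2 h1]
      · rw [dAB u v h1 h2, dAB v u h2 h1, abs_sub_comm]
    · -- triangle
      intro p q r
      have h2n : (4:ℝ) < (n:ℝ) := by exact_mod_cast h4
      by_cases hp : (↑p : Fin (n+1)) = x <;> by_cases hq : (↑q : Fin (n+1)) = x <;>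
        by_cases hr : (↑r : Fin (n+1)) = x
      · rw [dxx p r hp hr, dxx p q hp hq, dxx q r hq hr]; linarith
      · rw [dxA p r hp hr, dxx p q hp hq, dxA q r hq hr]; linarith
      · rw [dxx p r hp hr, dxA p q hp hq, dAx q r hq hr]
        have := hGlb ↑q; linarith
      · -- p = x, q r ≠ x
        rw [dxA p r hp hr, dxA p q hp hq, dAB q r hq hr]
        by_cases hqr : (↑q : Fin (n+1)) = (↑r : Fin (n+1))
        · rw [hqr]; simp
        · have h1 := hFne1 ↑q ↑r (hxne _ hq) (hxne _ hr) hqr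
          have b1 := (hmodb ↑q).1; have b2 := (hmodb ↑q).2
          have b3 := (hmodb ↑r).1; have b4 := (hmodb ↑r).2
          simp only [hG]
          linarith
      · rw [dAx p r hp hr, dAx p q hp hq, dxx q r hq hr]; linarith
      · -- q = x
        rw [dAB p r hp hr, dAx p q hp hq, dxA q r hq hr]
        have f1 := hF0 ↑p; have f2 := hF0 ↑r
        have f3 := hFub ↑p (hxne _ hp) (hmem p)
        have f4 := hFub ↑r (hxne _ hr) (hmem r)
        have g1 := hGlb ↑p; have g2 := hGlb ↑r
        have : |F ↑p - F ↑r| ≤ (n:ℝ) - 2 := abs_le.mpr ⟨by linarith, by linarith⟩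
        linarith
      · -- r = x
        rw [dAx p r hp hr, dAB p q hp hq, dAx q r hq hr]
        by_cases hpq : (↑p : Fin (n+1)) = (↑q : Fin (n+1))
        · rw [hpq]; simp
        · have h1 := hFne1 ↑p ↑q (hxne _ hp) (hxne _ hq) hpq
          have b1 := (hmodb ↑p).1; have b2 := (hmodb ↑p).2
          have b3 := (hmodb ↑q).1; have b4 := (hmodb ↑q).2
          simp only [hG]
          linarith
      · rw [dAB p r hp hr, dAB p q hp hq, dAB q r hq hr]
        exact abs_sub_le _ _ _
    · -- edge sets
      have hA1 : ∀ z w : Fin (n+1), (σ w.val = σ z.val + 1 ∨ σ z.val = σ w.val + 1) →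
          |F z - F w| = 1 := by
        intro z w hd1
        rcases hd1 with h | h
        · have hc : ((σ w.val : ℕ) : ℝ) = ((σ z.val : ℕ) : ℝ) + 1 := by exact_mod_cast h
          simp only [hF]
          rw [abs_sub_comm, abs_of_nonneg (by linarith)]
          linarith
        · have hc : ((σ z.val : ℕ) : ℝ) = ((σ w.val : ℕ) : ℝ) + 1 := by exact_mod_cast h
          simp only [hF]
          rw [abs_of_nonneg (by linarith)]
          linarith
      have xchar1 : ∀ z w : Fin (n+1), z.val < n → w.val < n → z.val ≠ m.val → w.val ≠ m.val →
          z ≠ w → G w = G z + |F z - F w| → cycAdj n z.val w.val := by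
        intro z w hz hw hzm hwm hne he
        have h1 := hFne1 z w hz hw hne
        have b1 := (hmodb z).1; have b2 := (hmodb z).2
        have b3 := (hmodb w).1; have b4 := (hmodb w).2
        have habs : |F z - F w| = 1 := by
          simp only [hG] at he
          exact le_antisymm (by linarith) h1
        simp only [hF] at habs
        have hone := abs_sub_eq_one habs
        exact (hadjiff _ _ hz hw hzm hwm (fun e => hne (Fin.ext e))).mpr hone
      have xchar2 : ∀ z w : Fin (n+1), z.val < n → w.val < n → z.val ≠ m.val → w.val ≠ m.val →
          z ≠ w → cycAdj n z.val w.val →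
          (G w = G z + |F z - F w| ∨ G z = G w + |F z - F w|) := by
        intro z w hz hw hzm hwm hne hadj
        have hvne : z.val ≠ w.val := fun e => hne (Fin.ext e)
        have hd1 := (hadjiff _ _ hz hw hzm hwm hvne).mp hadj
        have habs : |F z - F w| = 1 := hA1 z w hd1
        have hpar : σ z.val % 2 + σ w.val % 2 = 1 := by omega
        rcases Nat.eq_zero_or_pos (σ z.val % 2) with hp | hp
        · left
          have hq : σ w.val % 2 = 1 := by omega
          simp only [hG]
          rw [hp, hq, habs]
          norm_num
        · right
          have hp1 : σ z.val % 2 = 1 := by omega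
          have hq : σ w.val % 2 = 0 := by omega
          simp only [hG]
          rw [hp1, hq, habs]
          norm_num
      ext s
      simp only [metricEdges, inducedEdges, cycE, Set.mem_setOf_eq]
      constructor
      · intro hs
        rcases hs with ⟨u, v, w, hun, hvn', hwn, huv, huw, hvw, himg⟩ |
          ⟨u, v, hun, hvn', hadj, himg⟩
        · obtain ⟨u', v', w', hu', hv', hw', hseq⟩ := preimage_triple himg
          subst hu'; subst hv'; subst hw'
          have nxu : (↑u' : Fin (n+1)) ≠ x := hnex _ hun
          have nxv : (↑v' : Fin (n+1)) ≠ x := hnex _ hvn'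
          have nxw : (↑w' : Fin (n+1)) ≠ x := hnex _ hwn
          have hax : ∀ a : U, a ∈ ({u', v', w'} : Set U) → (↑a : Fin (n+1)) ≠ x := by
            intro a ha
            simp only [Set.mem_insert_iff, Set.mem_singleton_iff] at ha
            rcases ha with rfl | rfl | rfl
            exacts [nxu, nxv, nxw]
          have p1 : F ↑u' ≠ F ↑v' := by
            intro e
            simp only [hF] at e
            exact huv (Fin.ext (hσinj _ _ hun hvn' (by exact_mod_cast e)))
          have p2 : F ↑u' ≠ F ↑w' := by
            intro e
            simp only [hF] at e
            exact huw (Fin.ext (hσinj _ _ hun hwn (by exact_mod_cast e)))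
          have p3 : F ↑v' ≠ F ↑w' := by
            intro e
            simp only [hF] at e
            exact hvw (Fin.ext (hσinj _ _ hvn' hwn (by exact_mod_cast e)))
          obtain ⟨a, b, c, hset, hmb⟩ := line_triple d (fun z : U => F ↑z) u' v' w'
            (fun a b ha hb => dAB a b (hax a ha) (hax b hb)) p1 p2 p3
          exact ⟨a, b, c, by rw [hseq, ← hset], hmb⟩
        · obtain ⟨x', u', v', hx', hu', hv', hseq⟩ := preimage_triple himg
          subst hu'; subst hv'
          have hx'x : (↑x' : Fin (n+1)) = x := hx'
          have nxu : (↑u' : Fin (n+1)) ≠ x := hnex _ hun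
          have nxv : (↑v' : Fin (n+1)) ≠ x := hnex _ hvn'
          have hvne : (↑u' : Fin (n+1)).val ≠ (↑v' : Fin (n+1)).val := by
            simp only [cycAdj] at hadj; omega
          have huv' : (↑u' : Fin (n+1)) ≠ ↑v' := fun e => hvne (congrArg Fin.val e)
          rcases xchar2 ↑u' ↑v' hun hvn' (hmem u') (hmem v') huv' hadj with hc | hc
          · refine ⟨x', u', v', hseq, ?_, ?_, ?_, ?_⟩
            · exact fun e => nxu (by rw [← e]; exact hx'x)
            · exact fun e => nxv (by rw [← e]; exact hx'x)
            · exact fun e => huv' (congrArg Subtype.val e)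
            · rw [dxA x' u' hx'x nxu, dAB u' v' nxu nxv, dxA x' v' hx'x nxv]
              linarith
          · refine ⟨x', v', u', by rw [hseq]; ext z; simp; tauto, ?_, ?_, ?_, ?_⟩
            · exact fun e => nxv (by rw [← e]; exact hx'x)
            · exact fun e => nxu (by rw [← e]; exact hx'x)
            · exact fun e => huv' (congrArg Subtype.val e).symm
            · rw [dxA x' v' hx'x nxv, dAB v' u' nxv nxu, dxA x' u' hx'x nxu]
              rw [abs_sub_comm]
              linarith
      · rintro ⟨u, v, w, rfl, hmb⟩
        obtain ⟨huv, huw, hvw, heq⟩ := hmb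
        by_cases h1 : (↑u : Fin (n+1)) = x <;> by_cases h2 : (↑v : Fin (n+1)) = x <;>
          by_cases h3 : (↑w : Fin (n+1)) = x
        · exact absurd (Subtype.ext (h1.trans h2.symm)) huv
        · exact absurd (Subtype.ext (h1.trans h2.symm)) huv
        · exact absurd (Subtype.ext (h1.trans h3.symm)) huw
        · -- u = x only
          right
          rw [dxA u v h1 h2, dAB v w h2 h3, dxA u w h1 h3] at heq
          have hvw' : (↑v : Fin (n+1)) ≠ ↑w := Subtype.coe_injective.ne hvw
          have hadj := xchar1 ↑v ↑w (hxne _ h2) (hxne _ h3) (hmem v) (hmem w) hvw'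
            (by linarith)
          refine ⟨↑v, ↑w, hxne _ h2, hxne _ h3, hadj, ?_⟩
          simp [Set.image_insert_eq, h1, hxdef]
        · exact absurd (Subtype.ext (h2.trans h3.symm)) hvw
        · -- v = x only : impossible
          exfalso
          rw [dAx u v h1 h2, dxA v w h2 h3, dAB u w h1 h3] at heq
          have f3 := hFub ↑u (hxne _ h1) (hmem u)
          have f4 := hFub ↑w (hxne _ h3) (hmem w)
          have f1 := hF0 (↑u : Fin (n+1)); have f2 := hF0 (↑w : Fin (n+1))
          have g1 := hGlb (↑u : Fin (n+1)); have g2 := hGlb (↑w : Fin (n+1))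
          have h2n : (4:ℝ) < (n:ℝ) := by exact_mod_cast h4
          have habs : |F ↑u - F ↑w| ≤ (n:ℝ) - 2 := abs_le.mpr ⟨by linarith, by linarith⟩
          linarith
        · -- w = x only
          right
          rw [dAB u v h1 h2, dAx v w h2 h3, dAx u w h1 h3] at heq
          have huv' : (↑u : Fin (n+1)) ≠ ↑v := Subtype.coe_injective.ne huv
          have hadj := xchar1 ↑v ↑u (hxne _ h2) (hxne _ h1) (hmem v) (hmem u) (Ne.symm huv')
            (by rw [abs_sub_comm]; linarith)
          refine ⟨↑v, ↑u, hxne _ h2, hxne _ h1, hadj, ?_⟩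
          have himg2 : Subtype.val '' ({u, v, w} : Set U) = {x, ↑v, ↑u} := by
            rw [Set.image_insert_eq, Set.image_insert_eq, Set.image_singleton, h3]
            ext z; simp; tauto
          rw [himg2, hxdef]
        · left
          refine ⟨↑u, ↑v, ↑w, hxne _ h1, hxne _ h2, hxne _ h3,
            Subtype.coe_injective.ne huv, Subtype.coe_injective.ne huw,
            Subtype.coe_injective.ne hvw, ?_⟩
          simp [Set.image_insert_eq]
  · -- x ∉ U : line metric
    refine ⟨fun u v => |((u : Fin (n+1)).val : ℝ) - ((v : Fin (n+1)).val : ℝ)|, ⟨?_, ?_, ?_⟩, ?_⟩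
    · intro u v
      constructor
      · intro h
        have h1 := abs_eq_zero.mp h
        have h2 : (((u : Fin (n+1)).val : ℕ) : ℝ) = (((v : Fin (n+1)).val : ℕ) : ℝ) := by linarith
        have h3 : (u : Fin (n+1)).val = (v : Fin (n+1)).val := by exact_mod_cast h2
        exact Subtype.ext (Fin.ext h3)
      · intro h; rw [h]; simp
    · intro u v; exact abs_sub_comm _ _
    · intro u v w; exact abs_sub_le _ _ _
    · have hvn : ∀ z : Fin (n+1), z ∈ U → z.val < n := by
        intro z hz
        exact hxne z (fun e => hxU (e ▸ hz))
      ext s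
      simp only [metricEdges, inducedEdges, cycE, Set.mem_setOf_eq]
      constructor
      · intro hs
        rcases hs with ⟨u, v, w, hun, hvn', hwn, huv, huw, hvw, himg⟩ |
          ⟨u, v, hun, hvn', hadj, himg⟩
        · obtain ⟨u', v', w', hu', hv', hw', hseq⟩ := preimage_triple himg
          subst hu'; subst hv'; subst hw'
          have p1 : (((u' : Fin (n+1)).val : ℕ) : ℝ) ≠ ((v' : Fin (n+1)).val : ℝ) := by
            intro e
            exact huv (Fin.ext (by exact_mod_cast e))
          have p2 : (((u' : Fin (n+1)).val : ℕ) : ℝ) ≠ ((w' : Fin (n+1)).val : ℝ) := by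
            intro e
            exact huw (Fin.ext (by exact_mod_cast e))
          have p3 : (((v' : Fin (n+1)).val : ℕ) : ℝ) ≠ ((w' : Fin (n+1)).val : ℝ) := by
            intro e
            exact hvw (Fin.ext (by exact_mod_cast e))
          obtain ⟨a, b, c, hset, hmb⟩ := line_triple
            (fun u v : U => |((u : Fin (n+1)).val : ℝ) - ((v : Fin (n+1)).val : ℝ)|)
            (fun z : U => ((z : Fin (n+1)).val : ℝ)) u' v' w'
            (fun a b _ _ => rfl) p1 p2 p3
          exact ⟨a, b, c, by rw [hseq, ← hset], hmb⟩
        · exfalso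
          have hxmem : x ∈ Subtype.val '' s := by
            rw [himg]; exact Set.mem_insert _ _
          obtain ⟨z, hz, hzx⟩ := hxmem
          exact hxU (hzx ▸ z.2)
      · rintro ⟨u, v, w, rfl, huv, huw, hvw, heq⟩
        left
        refine ⟨↑u, ↑v, ↑w, hvn _ u.2, hvn _ v.2, hvn _ w.2,
          Subtype.coe_injective.ne huv, Subtype.coe_injective.ne huw,
          Subtype.coe_injective.ne hvw, ?_⟩
        simp [Set.image_insert_eq]

lemma col_cases (d : α → α → ℝ) (hs : ∀ a b, d a b = d b a)
    {u v w : α} (h : ({u,v,w} : Set α) ∈ metricEdges d)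
    (huv : u ≠ v) (huw : u ≠ w) (hvw : v ≠ w) :
    d u v + d v w = d u w ∨ d v u + d u w = d v w ∨ d u w + d w v = d u v := by
  obtain ⟨p, q, r, hset, hpq, hpr, hqr, heq⟩ := h
  have hu : u = p ∨ u = q ∨ u = r := by
    have : u ∈ ({p,q,r} : Set α) := by rw [← hset]; simp
    simpa using this
  have hv : v = p ∨ v = q ∨ v = r := by
    have : v ∈ ({p,q,r} : Set α) := by rw [← hset]; simp
    simpa using this
  have hw : w = p ∨ w = q ∨ w = r := by
    have : w ∈ ({p,q,r} : Set α) := by rw [← hset]; simp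
    simpa using this
  rcases hu with rfl | rfl | rfl <;> rcases hv with rfl | rfl | rfl <;>
    rcases hw with rfl | rfl | rfl <;>
    first
      | exact absurd rfl huv
      | exact absurd rfl huw
      | exact absurd rfl hvw
      | exact absurd rfl hpq
      | exact absurd rfl hpr
      | exact absurd rfl hqr
      | (left; linarith [hs u v, hs u w, hs v w])
      | (right; left; linarith [hs u v, hs u w, hs v w])
      | (right; right; linarith [hs u v, hs u w, hs v w])


lemma line_of_all_collinear {α : Type*} [Fintype α] (hcard : 5 ≤ Fintype.card α)
    (d : α → α → ℝ)
    (heq0 : ∀ x y, d x y = 0 ↔ x = y)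
    (hs : ∀ x y, d x y = d y x)
    (htri : ∀ x y z, d x z ≤ d x y + d y z)
    (hcol : ∀ u v w : α, u ≠ v → u ≠ w → v ≠ w →
      d u v + d v w = d u w ∨ d v u + d u w = d v w ∨ d u w + d w v = d u v) :
    ∃ f : α → ℝ, ∀ u v, d u v = |f u - f v| := by
  have hnonneg : ∀ u v, 0 ≤ d u v := by
    intro u v
    have h1 : d u u = 0 := (heq0 u u).2 rfl
    have h2 := htri u v u
    have h3 := hs u v
    linarith
  have hpos : ∀ u v, u ≠ v → 0 < d u v := fun u v h =>
    lt_of_le_of_ne (hnonneg u v) (fun e => h ((heq0 u v).1 e.symm))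
  letI := Classical.decEq α
  obtain ⟨a0, b0, hab0⟩ := Fintype.exists_pair_of_one_lt_card (α := α) (by omega)
  obtain ⟨⟨a, b⟩, -, hmax⟩ := Finset.exists_max_image (Finset.univ : Finset (α × α))
    (fun p => d p.1 p.2) ⟨(a0, b0), Finset.mem_univ _⟩
  have hmax' : ∀ u v, d u v ≤ d a b := fun u v => hmax (u, v) (Finset.mem_univ _)
  set D := d a b with hD
  have hDpos : 0 < D := lt_of_lt_of_le (hpos a0 b0 hab0) (hmax' a0 b0)
  have hab : a ≠ b := fun e => (ne_of_gt hDpos) (((heq0 a b).2 e).symm ▸ rfl)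
  have h2 : ∀ u, d a u + d u b = D := by
    intro u
    by_cases hua : u = a
    · rw [hua, (heq0 a a).2 rfl, hD]; ring
    by_cases hub : u = b
    · rw [hub, (heq0 b b).2 rfl, hD]; ring
    rcases hcol a u b (Ne.symm hua) hab hub with h | h | h
    · exact h
    · exfalso; have := hmax' u b; have := hpos u a hua; linarith
    · exfalso; have := hmax' a u; have := hpos b u (fun e => hub e.symm); linarith
  set f := d a with hf
  have hfa : f a = 0 := (heq0 a a).2 rfl
  have hfb : f b = D := rfl
  have hf0 : ∀ u, 0 ≤ f u := fun u => hnonneg a u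
  have hfD : ∀ u, f u ≤ D := by intro u; have := h2 u; have := hnonneg u b; linarith
  have key : ∀ u v, u ≠ v → d u v = |f u - f v| ∨ (f u + f v = D ∧ d u v = D) := by
    intro u v huv
    by_cases hua : u = a
    · left; rw [hua, hfa]; rw [abs_sub_comm, sub_zero, abs_of_nonneg (hf0 v), hf]
    by_cases hva : v = a
    · left; rw [hva, hfa, sub_zero, abs_of_nonneg (hf0 u), hf, hs u a]
    by_cases hub : u = b
    · left; rw [hub, hfb, abs_of_nonneg (by linarith [hfD v])]
      have := h2 v; linarith [hs b v]
    by_cases hvb : v = b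
    · left; rw [hvb, hfb, abs_of_nonpos (by linarith [hfD u])]
      have := h2 u; linarith
    rcases hcol a u v (Ne.symm hua) (Ne.symm hva) huv with h1 | h1 | h1
    · -- d a u + d u v = d a v : d u v = f v - f u
      left; rw [abs_sub_comm, abs_of_nonneg (by linarith [hnonneg u v])]; linarith
    · -- d u a + d a v = d u v : d u v = f u + f v
      have h1' : d u v = f u + f v := by rw [hs u a] at h1; linarith
      rcases hcol u v b huv hub hvb with g1 | g1 | g1
      · -- d u v + d v b = d u b
        left
        have e1 := h2 u; have e2 := h2 v
        rw [abs_of_nonpos (by linarith [hnonneg u v])]; linarith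
      · -- d v u + d u b = d v b
        left
        have e1 := h2 u; have e2 := h2 v
        rw [hs v u] at g1
        rw [abs_of_nonneg (by linarith [hnonneg u v])]; linarith
      · -- d u b + d b v = d u v : d u v = 2D - f u - f v
        right
        have e1 := h2 u; have e2 := h2 v
        rw [hs b v] at g1
        constructor <;> linarith
    · -- d a v + d v u = d a u : d u v = f u - f v
      left; rw [hs v u] at h1
      rw [abs_of_nonneg (by linarith [hnonneg u v])]; linarith
  by_cases hbad : ∃ p q, p ≠ q ∧ f p + f q = D ∧ d p q = D ∧ d p q ≠ |f p - f q| ∧ f p ≤ f q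
  · exfalso
    obtain ⟨p, q, hpq, hsum, hdD, hnb, hle⟩ := hbad
    have hfp0 : 0 < f p := by
      rcases lt_or_eq_of_le (hf0 p) with h | h
      · exact h
      · exfalso
        have hpa : a = p := (heq0 a p).1 h.symm
        apply hnb
        subst hpa
        rw [hfa, abs_sub_comm, abs_of_nonneg (by linarith [hf0 q])]; linarith
    have hfqD : f q < D := by linarith
    have hfq0 : 0 < f q := by linarith
    have hfpD : f p < D := by linarith
    have hpa : p ≠ a := fun e => by rw [e, hfa] at hfp0; linarith
    have hpb : p ≠ b := fun e => by rw [e, hfb] at hfpD; linarith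
    have hqa : q ≠ a := fun e => by rw [e, hfa] at hfq0; linarith
    have hqb : q ≠ b := fun e => by rw [e, hfb] at hfqD; linarith
    have hsub : ∀ w : α, w = a ∨ w = b ∨ w = p ∨ w = q := by
      intro w
      by_contra hcon
      push_neg at hcon
      obtain ⟨hwa, hwb, hwp, hwq⟩ := hcon
      have hfwD : f w ≤ D := hfD w
      have hfw0 : 0 ≤ f w := hf0 w
      rcases key p w (fun e => hwp e.symm) with kp | kp <;>
        rcases key q w (fun e => hwq e.symm) with kq | kq
      · -- both linear
        rcases hcol p w q (fun e => hwp e.symm) hpq hwq with c1 | c1 | c1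
        · -- d p w + d w q = d p q = D
          rw [kp, hs w q, kq, hdD] at c1
          have hw0 : f w = 0 ∨ f w = D := by
            rcases abs_cases (f p - f w) with ⟨e1, s1⟩ | ⟨e1, s1⟩ <;>
              rcases abs_cases (f q - f w) with ⟨e2, s2⟩ | ⟨e2, s2⟩ <;>
              rw [e1, e2] at c1 <;>
              first
                | (left; linarith)
                | (right; linarith)
                | (exfalso; linarith)
          rcases hw0 with hw0 | hw0
          · exact hwa (((heq0 a w).1 hw0).symm)
          · have hz : d w b = 0 := by have := h2 w; linarith
            exact hwb ((heq0 w b).1 hz)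
        · -- d w p + d p q = d w q
          rw [hs w p, kp, hdD, hs w q, kq] at c1
          have hb1 : |f q - f w| ≤ D := abs_le.2 ⟨by linarith, by linarith⟩
          have hb2 : |f p - f w| ≤ 0 := by linarith
          have hwp' : f p = f w := by
            have := abs_nonneg (f p - f w)
            have : |f p - f w| = 0 := le_antisymm hb2 this
            have := abs_eq_zero.1 this; linarith
          have : |f q - f w| = D := by linarith [abs_nonneg (f p - f w), hb2, c1]
          rcases abs_cases (f q - f w) with ⟨e1, _⟩ | ⟨e1, _⟩ <;> rw [e1] at this <;> linarith
        · -- d p q + d q w = d p w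
          rw [kp, hdD, kq] at c1
          have hb1 : |f p - f w| ≤ D := abs_le.2 ⟨by linarith, by linarith⟩
          have hb2 : |f q - f w| ≤ 0 := by linarith
          have hwq' : f q = f w := by
            have h0 := abs_nonneg (f q - f w)
            have : |f q - f w| = 0 := le_antisymm hb2 h0
            have := abs_eq_zero.1 this; linarith
          have : |f p - f w| = D := by linarith [abs_nonneg (f q - f w)]
          rcases abs_cases (f p - f w) with ⟨e1, _⟩ | ⟨e1, _⟩ <;> rw [e1] at this <;> linarith
      · -- p-w linear, q-w antipodal: f w = f p
        obtain ⟨kq1, kq2⟩ := kq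
        have : f w = f p := by linarith
        have : d p w = 0 := by rw [kp, this]; simp
        exact hwp (((heq0 p w).1 this).symm)
      · obtain ⟨kp1, kp2⟩ := kp
        have : f w = f q := by linarith
        have : d q w = 0 := by rw [kq, this]; simp
        exact hwq (((heq0 q w).1 this).symm)
      · obtain ⟨kp1, kp2⟩ := kp
        obtain ⟨kq1, kq2⟩ := kq
        rcases hcol p q w hpq (fun e => hwp e.symm) (fun e => hwq e.symm) with c1 | c1 | c1 <;>
          linarith [hs q p, hs w q, hs q w, hdD, kp2, kq2, hDpos]
    have hss : (Finset.univ : Finset α) ⊆ {a, b, p, q} := by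
      intro w _
      rcases hsub w with rfl | rfl | rfl | rfl <;> simp
    have hc1 := Finset.card_le_card hss
    rw [Finset.card_univ] at hc1
    have hc2 : ({a, b, p, q} : Finset α).card ≤ 4 := by
      apply le_trans (Finset.card_insert_le _ _)
      have : ({b, p, q} : Finset α).card ≤ 3 := by
        apply le_trans (Finset.card_insert_le _ _)
        have : ({p, q} : Finset α).card ≤ 2 := by
          apply le_trans (Finset.card_insert_le _ _)
          simp
        omega
      omega
    omega
  · -- no bad pair: line
    push_neg at hbad
    refine ⟨f, fun u v => ?_⟩
    by_cases huv : u = v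
    · subst huv; rw [(heq0 u u).2 rfl]; simp
    rcases key u v huv with k | k
    · exact k
    · obtain ⟨k1, k2⟩ := k
      by_contra hne
      rcases le_total (f u) (f v) with hle | hle
      · have := hbad u v huv k1 k2 hne
        linarith
      · have := hbad v u (fun e => huv e.symm) (by linarith) (by rw [hs v u]; exact k2)
          (by rw [hs v u, abs_sub_comm]; exact hne)
        linarith


lemma core (n : ℕ) (hn : Even n) (h6 : 6 ≤ n) (H K : ℕ → ℝ) (Adj : ℕ → ℕ → Prop)
    (hsym : ∀ i j, Adj i j → Adj j i)
    (hirr : ∀ i, ¬ Adj i i)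
    (hdeg2 : ∀ i, i < n → ∃ p q, p < n ∧ q < n ∧ p ≠ q ∧ Adj i p ∧ Adj i q)
    (hdegle : ∀ i p q r, i < n → p < n → q < n → r < n →
        Adj i p → Adj i q → Adj i r → p = q ∨ p = r ∨ q = r)
    (hC3 : ∀ i j l, i < n → j < n → l < n → i ≠ j → i ≠ l → j ≠ l →
        Adj i j → Adj j l → Adj i l → False)
    (hC4 : ∀ i j l m, i < n → j < n → l < n → m < n →
        i ≠ j → i ≠ l → i ≠ m → j ≠ l → j ≠ m → l ≠ m →
        Adj i j → Adj j l → Adj l m → Adj m i → False)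
    (hHmono : ∀ i j, i < j → j < n → H j ≤ H i)
    (hKmono : ∀ i j, i < j → j < n → K i ≤ K j)
    (hHK : ∀ i j, i < j → j < n → H i = H j → K i = K j → False)
    (hsumLB : ∀ i j, i < j → j < n → 0 ≤ K i + H j)
    (hiff : ∀ i j, i < j → j < n → (Adj i j ↔ (H i = H j ∨ K i = K j ∨ K i + H j = 0))) :
    False := by
  have three_nbrs : ∀ v a b c, v < n → a < n → b < n → c < n → a ≠ b → a ≠ c → b ≠ c →
      Adj v a → Adj v b → Adj v c → False := by
    intro v a b c hv ha hb hc hab hac hbc h1 h2 h3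
    rcases hdegle v a b c hv ha hb hc h1 h2 h3 with h | h | h
    · exact hab h
    · exact hac h
    · exact hbc h
  have Hedge : ∀ i j, i < j → j < n → H i = H j → Adj i j :=
    fun i j h1 h2 e => (hiff i j h1 h2).2 (Or.inl e)
  have Kedge : ∀ i j, i < j → j < n → K i = K j → Adj i j :=
    fun i j h1 h2 e => (hiff i j h1 h2).2 (Or.inr (Or.inl e))
  have Sedge : ∀ i j, i < j → j < n → K i + H j = 0 → Adj i j :=
    fun i j h1 h2 e => (hiff i j h1 h2).2 (Or.inr (Or.inr e))
  have squeezeH : ∀ i l j, i ≤ l → l ≤ j → j < n → H i = H j → H l = H i := by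
    intro i l j h1 h2 hj e
    rcases eq_or_lt_of_le h1 with rfl | h1'
    · rfl
    rcases eq_or_lt_of_le h2 with rfl | h2'
    · exact e.symm
    have g1 := hHmono i l h1' (by omega)
    have g2 := hHmono l j h2' hj
    linarith
  have squeezeK : ∀ i l j, i ≤ l → l ≤ j → j < n → K i = K j → K l = K i := by
    intro i l j h1 h2 hj e
    rcases eq_or_lt_of_le h1 with rfl | h1'
    · rfl
    rcases eq_or_lt_of_le h2 with rfl | h2'
    · exact e.symm
    have g1 := hKmono i l h1' (by omega)
    have g2 := hKmono l j h2' hj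
    linarith
  have no3H : ∀ i j l, i < j → j < l → l < n → H i = H j → H j = H l → False :=
    fun i j l h1 h2 h3 e1 e2 => hC3 i j l (by omega) (by omega) h3 (by omega) (by omega) (by omega)
      (Hedge i j h1 (by omega) e1) (Hedge j l h2 h3 e2) (Hedge i l (by omega) h3 (e1.trans e2))
  have no3K : ∀ i j l, i < j → j < l → l < n → K i = K j → K j = K l → False :=
    fun i j l h1 h2 h3 e1 e2 => hC3 i j l (by omega) (by omega) h3 (by omega) (by omega) (by omega)
      (Kedge i j h1 (by omega) e1) (Kedge j l h2 h3 e2) (Kedge i l (by omega) h3 (e1.trans e2))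
  have sumpos : ∀ i j, i < j → j < n → K i + H j = 0 →
      i ≤ 1 ∧ n - 2 ≤ j ∧ ¬(i = 1 ∧ j = n - 2) := by
    intro i j hij hjn hsum0
    have clos : ∀ i' j', i' ≤ i → j ≤ j' → j' < n → Adj i' j' := by
      intro i' j' h1 h2 h3
      have k1 : K i' ≤ K i := by
        rcases eq_or_lt_of_le h1 with rfl | h
        · exact le_refl _
        · exact hKmono i' i h (by omega)
      have k2 : H j' ≤ H j := by
        rcases eq_or_lt_of_le h2 with rfl | h
        · exact le_refl _
        · exact hHmono j j' h h3
      have k3 := hsumLB i' j' (by omega) h3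
      exact Sedge i' j' (by omega) h3 (by linarith)
    refine ⟨?_, ?_, ?_⟩
    · by_contra hc
      push_neg at hc
      exact three_nbrs j 0 1 i hjn (by omega) (by omega) (by omega) (by omega) (by omega) (by omega)
        (hsym _ _ (clos 0 j (by omega) le_rfl hjn)) (hsym _ _ (clos 1 j (by omega) le_rfl hjn))
        (hsym _ _ (clos i j le_rfl le_rfl hjn))
    · by_contra hc
      push_neg at hc
      exact three_nbrs i j (n-2) (n-1) (by omega) hjn (by omega) (by omega) (by omega) (by omega)
        (by omega) (clos i j le_rfl le_rfl hjn) (clos i (n-2) le_rfl (by omega) (by omega))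
        (clos i (n-1) le_rfl (by omega) (by omega))
    · rintro ⟨rfl, rfl⟩
      exact hC4 0 (n-2) 1 (n-1) (by omega) (by omega) (by omega) (by omega) (by omega) (by omega)
        (by omega) (by omega) (by omega) (by omega)
        (clos 0 (n-2) (by omega) le_rfl (by omega)) (hsym _ _ (clos 1 (n-2) le_rfl le_rfl (by omega)))
        (clos 1 (n-1) le_rfl (by omega) (by omega)) (hsym _ _ (clos 0 (n-1) (by omega) (by omega) (by omega)))
  have farSum : ∀ i j, i < j → j < n → i + 2 ≤ j → Adj i j → K i + H j = 0 := by
    intro i j h1 hjn h2 hadj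
    rcases (hiff i j h1 hjn).1 hadj with h | h | h
    · exfalso
      have e1 : H (i+1) = H i := squeezeH i (i+1) j (by omega) (by omega) hjn h
      exact no3H i (i+1) j (by omega) (by omega) hjn e1.symm (by rw [e1]; exact h)
    · exfalso
      have e1 : K (i+1) = K i := squeezeK i (i+1) j (by omega) (by omega) hjn h
      exact no3K i (i+1) j (by omega) (by omega) hjn e1.symm (by rw [e1]; exact h)
    · exact h
  have nbr_class : ∀ v p, v < n → p < n → v ≠ p → Adj v p →
      (p = v + 1 ∨ v = p + 1 ∨ (v ≤ 1 ∧ n - 2 ≤ p ∧ ¬(v = 1 ∧ p = n - 2)) ∨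
        (p ≤ 1 ∧ n - 2 ≤ v ∧ ¬(p = 1 ∧ v = n - 2))) := by
    intro v p hv hp hvp hadj
    rcases lt_trichotomy v p with h | h | h
    · by_cases hc : p = v + 1
      · exact Or.inl hc
      · have hsu := farSum v p h hp (by omega) hadj
        exact Or.inr (Or.inr (Or.inl (sumpos v p h hp hsu)))
    · exact absurd h hvp
    · by_cases hc : v = p + 1
      · exact Or.inr (Or.inl hc)
      · have hsu := farSum p v h hv (by omega) (hsym _ _ hadj)
        exact Or.inr (Or.inr (Or.inr (sumpos p v h hv hsu)))
  have consA : ∀ v, 2 ≤ v → v ≤ n - 3 → Adj v (v+1) ∧ Adj (v-1) v := by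
    intro v h2v h3v
    obtain ⟨p, q, hp, hq, hpq, hap, haq⟩ := hdeg2 v (by omega)
    have hvp : v ≠ p := fun e => hirr v (by rw [e] at hap ⊢; exact hap)
    have hvq : v ≠ q := fun e => hirr v (by rw [e] at haq ⊢; exact haq)
    have cp := nbr_class v p (by omega) hp hvp hap
    have cq := nbr_class v q (by omega) hq hvq haq
    have cp' : p = v + 1 ∨ p = v - 1 := by rcases cp with h|h|h|h <;> omega
    have cq' : q = v + 1 ∨ q = v - 1 := by rcases cq with h|h|h|h <;> omega
    constructor
    · have hor : p = v + 1 ∨ q = v + 1 := by omega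
      rcases hor with rfl | rfl
      · exact hap
      · exact haq
    · have hor : p = v - 1 ∨ q = v - 1 := by omega
      rcases hor with rfl | rfl
      · exact hsym _ _ hap
      · exact hsym _ _ haq
  have A12 : Adj 1 2 := by
    have h := (consA 2 (by omega) (by omega)).2
    have e : (2:ℕ) - 1 = 1 := rfl
    rwa [e] at h
  have An32 : Adj (n-3) (n-2) := by
    have h := (consA (n-3) (by omega) (by omega)).1
    have e : n - 3 + 1 = n - 2 := by omega
    rwa [e] at h
  have consAllMid : ∀ j, 1 ≤ j → j ≤ n - 3 → Adj j (j+1) := by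
    intro j h1 h2
    rcases eq_or_lt_of_le h1 with e | h
    · rw [← e]; exact A12
    · exact (consA j (by omega) h2).1
  have nbrs0 : ∀ p, p < n → Adj 0 p → p = 1 ∨ p = n - 2 ∨ p = n - 1 := by
    intro p hp h
    have h0p : (0:ℕ) ≠ p := fun e => hirr 0 (by rw [← e] at h; exact h)
    have := nbr_class 0 p (by omega) hp h0p h
    omega
  have nbrs1 : ∀ p, p < n → Adj 1 p → p = 0 ∨ p = 2 ∨ p = n - 1 := by
    intro p hp h
    have h0p : (1:ℕ) ≠ p := fun e => hirr 1 (by rw [← e] at h; exact h)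
    have := nbr_class 1 p (by omega) hp h0p h
    omega
  have nbrsN1 : ∀ p, p < n → Adj (n-1) p → p = n - 2 ∨ p = 0 ∨ p = 1 := by
    intro p hp h
    have h0p : n - 1 ≠ p := fun e => hirr (n-1) (by rw [← e] at h; exact h)
    have := nbr_class (n-1) p (by omega) hp h0p h
    omega
  by_cases hA01 : Adj 0 1
  · -- Case A
    have hAdj0n2 : ¬ Adj 0 (n-2) := by
      intro h02
      obtain ⟨p, q, hp, hq, hpq, hap, haq⟩ := hdeg2 (n-1) (by omega)
      rcases nbrsN1 p hp hap with rfl | rfl | rfl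
      · exact three_nbrs (n-2) (n-3) 0 (n-1) (by omega) (by omega) (by omega) (by omega)
          (by omega) (by omega) (by omega) (hsym _ _ An32) (hsym _ _ h02) (hsym _ _ hap)
      · exact three_nbrs 0 1 (n-2) (n-1) (by omega) (by omega) (by omega) (by omega)
          (by omega) (by omega) (by omega) hA01 h02 (hsym _ _ hap)
      · exact three_nbrs 1 0 2 (n-1) (by omega) (by omega) (by omega) (by omega)
          (by omega) (by omega) (by omega) (hsym _ _ hA01) A12 (hsym _ _ hap)
    have hA0n1 : Adj 0 (n-1) := by
      obtain ⟨p, q, hp, hq, hpq, hap, haq⟩ := hdeg2 0 (by omega)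
      rcases nbrs0 p hp hap with rfl | rfl | rfl <;> rcases nbrs0 q hq haq with rfl | rfl | rfl <;>
        first
          | exact hap
          | exact haq
          | exact absurd rfl hpq
          | exact absurd hap hAdj0n2
          | exact absurd haq hAdj0n2
    have hAn2n1 : Adj (n-2) (n-1) := by
      obtain ⟨p, q, hp, hq, hpq, hap, haq⟩ := hdeg2 (n-1) (by omega)
      rcases nbrsN1 p hp hap with rfl | rfl | rfl <;> rcases nbrsN1 q hq haq with rfl | rfl | rfl <;>
        first
          | exact hsym _ _ hap
          | exact hsym _ _ haq
          | exact absurd rfl hpq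
          | (exfalso; exact three_nbrs 1 0 2 (n-1) (by omega) (by omega) (by omega) (by omega)
              (by omega) (by omega) (by omega) (hsym _ _ hA01) A12 (hsym _ _ hap))
          | (exfalso; exact three_nbrs 1 0 2 (n-1) (by omega) (by omega) (by omega) (by omega)
              (by omega) (by omega) (by omega) (hsym _ _ hA01) A12 (hsym _ _ haq))
    have consAll : ∀ j, j ≤ n - 2 → Adj j (j+1) := by
      intro j hj
      by_cases e0 : j = 0
      · rw [e0]; exact hA01
      by_cases e1 : j = n - 2
      · rw [e1]
        have e : n - 2 + 1 = n - 1 := by omega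
        rw [e]; exact hAn2n1
      · exact consAllMid j (by omega) (by omega)
    have TY : ∀ j, j ≤ n - 2 → (H j = H (j+1) ∨ K j = K (j+1)) := by
      intro j hj
      rcases (hiff j (j+1) (by omega) (by omega)).1 (consAll j hj) with h | h | h
      · exact Or.inl h
      · exact Or.inr h
      · exfalso
        obtain ⟨e1, e2, e3⟩ := sumpos j (j+1) (by omega) (by omega) h
        omega
    have EX : ∀ j, j ≤ n - 2 → ¬(H j = H (j+1) ∧ K j = K (j+1)) :=
      fun j hj ⟨e1, e2⟩ => hHK j (j+1) (by omega) (by omega) e1 e2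
    have ALTH : ∀ j, j + 1 ≤ n - 2 → H j = H (j+1) → H (j+1) = H (j+1+1) → False :=
      fun j hj e1 e2 => no3H j (j+1) (j+1+1) (by omega) (by omega) (by omega) e1 e2
    have ALTK : ∀ j, j + 1 ≤ n - 2 → K j = K (j+1) → K (j+1) = K (j+1+1) → False :=
      fun j hj e1 e2 => no3K j (j+1) (j+1+1) (by omega) (by omega) (by omega) e1 e2
    have PAR : ∀ t, t ≤ n - 2 → ((H t = H (t+1)) ↔ (Even t ↔ H 0 = H 1)) := by
      intro t
      induction t with
      | zero => intro _; simp
      | succ t ih =>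
        intro ht
        have iht := ih (by omega)
        have step : (H (t+1) = H (t+1+1)) ↔ ¬ (H t = H (t+1)) := by
          constructor
          · intro h1 h0
            exact ALTH t (by omega) h0 h1
          · intro h0
            rcases TY (t+1) ht with h | h
            · exact h
            · exfalso
              rcases TY t (by omega) with g | g
              · exact h0 g
              · exact ALTK t (by omega) g h
        rw [step, iht, Nat.even_add_one]
        tauto
    have heven : Even (n-2) := by
      obtain ⟨k, hk⟩ := hn
      exact ⟨k - 1, by omega⟩
    have PARn2 : (H (n-2) = H (n-2+1)) ↔ (H 0 = H 1) := by
      rw [PAR (n-2) le_rfl]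
      tauto
    have hchord : K 0 + H (n-1) = 0 := by
      rcases (hiff 0 (n-1) (by omega) (by omega)).1 hA0n1 with h | h | h
      · exfalso
        have e1 : H 1 = H 0 := squeezeH 0 1 (n-1) (by omega) (by omega) (by omega) h
        have e2 : H 2 = H 0 := squeezeH 0 2 (n-1) (by omega) (by omega) (by omega) h
        exact no3H 0 1 2 (by omega) (by omega) (by omega) e1.symm (e1.trans e2.symm)
      · exfalso
        have e1 : K 1 = K 0 := squeezeK 0 1 (n-1) (by omega) (by omega) (by omega) h
        have e2 : K 2 = K 0 := squeezeK 0 2 (n-1) (by omega) (by omega) (by omega) h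
        exact no3K 0 1 2 (by omega) (by omega) (by omega) e1.symm (e1.trans e2.symm)
      · exact h
    rcases TY (n-2) le_rfl with hH | hK
    · have hrw : n - 2 + 1 = n - 1 := by omega
      rw [hrw] at hH
      have hsm : K 0 + H (n-2) = 0 := by rw [hH]; exact hchord
      have hA0n2 : Adj 0 (n-2) := Sedge 0 (n-2) (by omega) (by omega) hsm
      exact hAdj0n2 hA0n2
    · have hnH : ¬ (H (n-2) = H (n-2+1)) := fun e => EX (n-2) le_rfl ⟨e, hK⟩
      have hnH01 : ¬ (H 0 = H 1) := fun e => hnH (PARn2.2 e)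
      have hK01 : K 0 = K 1 := by
        rcases TY 0 (by omega) with h | h
        · exact absurd h hnH01
        · exact h
      have hsm : K 1 + H (n-1) = 0 := by rw [← hK01]; exact hchord
      have hA1n1 : Adj 1 (n-1) := Sedge 1 (n-1) (by omega) (by omega) hsm
      exact three_nbrs 1 0 2 (n-1) (by omega) (by omega) (by omega) (by omega)
        (by omega) (by omega) (by omega) (hsym _ _ hA01) A12 hA1n1
  · -- Case B
    have hA1n1 : Adj 1 (n-1) := by
      obtain ⟨p, q, hp, hq, hpq, hap, haq⟩ := hdeg2 1 (by omega)
      rcases nbrs1 p hp hap with rfl | rfl | rfl <;> rcases nbrs1 q hq haq with rfl | rfl | rfl <;>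
        first
          | exact hap
          | exact haq
          | exact absurd rfl hpq
          | exact absurd (hsym _ _ hap) hA01
          | exact absurd (hsym _ _ haq) hA01
    have hA0n1 : Adj 0 (n-1) := by
      obtain ⟨p, q, hp, hq, hpq, hap, haq⟩ := hdeg2 0 (by omega)
      rcases nbrs0 p hp hap with rfl | rfl | rfl <;> rcases nbrs0 q hq haq with rfl | rfl | rfl <;>
        first
          | exact hap
          | exact haq
          | exact absurd rfl hpq
          | exact absurd hap hA01
          | exact absurd haq hA01
    have hs1 : K 1 + H (n-1) = 0 := by
      rcases (hiff 1 (n-1) (by omega) (by omega)).1 hA1n1 with h | h | h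
      · exfalso
        have e1 : H 2 = H 1 := squeezeH 1 2 (n-1) (by omega) (by omega) (by omega) h
        have e2 : H 3 = H 1 := squeezeH 1 3 (n-1) (by omega) (by omega) (by omega) h
        exact no3H 1 2 3 (by omega) (by omega) (by omega) e1.symm (e1.trans e2.symm)
      · exfalso
        have e1 : K 2 = K 1 := squeezeK 1 2 (n-1) (by omega) (by omega) (by omega) h
        have e2 : K 3 = K 1 := squeezeK 1 3 (n-1) (by omega) (by omega) (by omega) h
        exact no3K 1 2 3 (by omega) (by omega) (by omega) e1.symm (e1.trans e2.symm)
      · exact h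
    have hs0 : K 0 + H (n-1) = 0 := by
      rcases (hiff 0 (n-1) (by omega) (by omega)).1 hA0n1 with h | h | h
      · exfalso
        have e1 : H 1 = H 0 := squeezeH 0 1 (n-1) (by omega) (by omega) (by omega) h
        have e2 : H 2 = H 0 := squeezeH 0 2 (n-1) (by omega) (by omega) (by omega) h
        exact no3H 0 1 2 (by omega) (by omega) (by omega) e1.symm (e1.trans e2.symm)
      · exfalso
        have e1 : K 1 = K 0 := squeezeK 0 1 (n-1) (by omega) (by omega) (by omega) h
        have e2 : K 2 = K 0 := squeezeK 0 2 (n-1) (by omega) (by omega) (by omega) h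
        exact no3K 0 1 2 (by omega) (by omega) (by omega) e1.symm (e1.trans e2.symm)
      · exact h
    exact hA01 (Kedge 0 1 (by omega) (by omega) (by linarith))



lemma pair_of_triple_eq {β : Type*} {x u v a b : β} (h : ({x,u,v} : Set β) = {x,a,b})
    (hxu : x ≠ u) (hxv : x ≠ v) (huv : u ≠ v) :
    (u = a ∧ v = b) ∨ (u = b ∧ v = a) := by
  have hu : u ∈ ({x,a,b} : Set β) := h ▸ (by simp)
  have hv : v ∈ ({x,a,b} : Set β) := h ▸ (by simp)
  simp only [Set.mem_insert_iff, Set.mem_singleton_iff] at hu hv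
  rcases hu with e | e | e
  · exact absurd e.symm hxu
  · rcases hv with f | f | f
    · exact absurd f.symm hxv
    · exact absurd (e.trans f.symm) huv
    · exact Or.inl ⟨e, f⟩
  · rcases hv with f | f | f
    · exact absurd f.symm hxv
    · exact Or.inr ⟨e, f⟩
    · exact absurd (e.trans f.symm) huv

lemma goal2 (n : ℕ) (hn : Even n) (h4 : 4 < n) : ¬ IsMetricHypergraph (cycE n) := by
  rintro ⟨d, hmet, hE⟩
  set x : Fin (n+1) := ⟨n, Nat.lt_succ_self n⟩ with hxdef
  have hxval : x.val = n := rfl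
  have dzero : ∀ a, d a a = 0 := fun a => (hmet.eq_iff a a).2 rfl
  have dnneg : ∀ a b, 0 ≤ d a b := by
    intro a b
    have h1 := hmet.triangle a b a
    have h2 := hmet.symm a b
    have h3 := dzero a
    linarith
  have ιlt : ∀ i : Fin n, (Fin.castSucc i).val < n := fun i => i.isLt
  have ιnex : ∀ i : Fin n, Fin.castSucc i ≠ x := by
    intro i e
    have h := congrArg Fin.val e
    rw [Fin.coe_castSucc, hxval] at h
    have := i.isLt
    omega
  have cinj : ∀ i j : Fin n, Fin.castSucc i = Fin.castSucc j → i = j :=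
    fun i j e => Fin.castSucc_inj.mp e
  have tripleE : ∀ i j k : Fin n, i ≠ j → i ≠ k → j ≠ k →
      ({Fin.castSucc i, Fin.castSucc j, Fin.castSucc k} : Set (Fin (n+1))) ∈ metricEdges d := by
    intro i j k hij hik hjk
    rw [← hE]
    exact Or.inl ⟨Fin.castSucc i, Fin.castSucc j, Fin.castSucc k, ιlt i, ιlt j, ιlt k,
      fun e => hij (cinj _ _ e), fun e => hik (cinj _ _ e), fun e => hjk (cinj _ _ e), rfl⟩
  have cA_sym : ∀ a b, cycAdj n a b → cycAdj n b a := by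
    intro a b h; simp only [cycAdj] at *; omega
  have hxne' : ∀ z : Fin (n+1), z.val < n → x ≠ z := by
    intro z h e
    rw [← e, hxval] at h
    omega
  have xE : ∀ u v : Fin (n+1), u.val < n → v.val < n → u ≠ v →
      (({x, u, v} : Set (Fin (n+1))) ∈ metricEdges d ↔ cycAdj n u.val v.val) := by
    intro u v hu hv huv
    rw [← hE]
    constructor
    · intro h
      rcases h with ⟨a, b, c, ha, hb, hc, hab, hac, hbc, hset⟩ | ⟨a, b, ha, hb, hadj, hset⟩
      · exfalso
        have hx : x ∈ ({a, b, c} : Set (Fin (n+1))) := hset ▸ (Set.mem_insert _ _)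
        simp only [Set.mem_insert_iff, Set.mem_singleton_iff] at hx
        rcases hx with e | e | e
        · rw [← e, hxval] at ha; omega
        · rw [← e, hxval] at hb; omega
        · rw [← e, hxval] at hc; omega
      · have hset' : ({x, u, v} : Set (Fin (n+1))) = {x, a, b} := hset
        have hab' : a ≠ b := by
          intro e
          rw [e] at hadj
          simp only [cycAdj] at hadj
          omega
        rcases pair_of_triple_eq hset' (hxne' u hu) (hxne' v hv) huv with ⟨e1, e2⟩ | ⟨e1, e2⟩
        · rw [e1, e2]; exact hadj
        · rw [e1, e2]; exact cA_sym _ _ hadj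
    · intro hadj
      exact Or.inr ⟨u, v, hu, hv, hadj, rfl⟩
  set d' : Fin n → Fin n → ℝ := fun i j => d (Fin.castSucc i) (Fin.castSucc j) with hd'
  obtain ⟨f, hf⟩ := line_of_all_collinear (α := Fin n) (by rw [Fintype.card_fin]; omega) d'
    (by
      intro i j
      constructor
      · intro e
        exact cinj _ _ ((hmet.eq_iff _ _).1 e)
      · intro e
        rw [e]
        exact dzero _)
    (fun i j => hmet.symm _ _)
    (fun i j k => hmet.triangle _ _ _)
    (by
      intro i j k hij hik hjk
      exact col_cases d hmet.symm (tripleE i j k hij hik hjk)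
        (fun e => hij (cinj _ _ e)) (fun e => hik (cinj _ _ e)) (fun e => hjk (cinj _ _ e)))
  have finj : Function.Injective f := by
    intro i j e
    have h1 : d' i j = 0 := by rw [hf i j, e]; simp
    exact cinj _ _ ((hmet.eq_iff _ _).1 h1)
  set g : Fin n → ℝ := fun i => d x (Fin.castSucc i) with hg
  have edgeiff : ∀ i j : Fin n, i ≠ j →
      (cycAdj n i.val j.val ↔ (|g i - g j| = |f i - f j| ∨ g i + g j = |f i - f j|)) := by
    intro i j hij
    have hinj : Fin.castSucc i ≠ Fin.castSucc j := fun e => hij (cinj _ _ e)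
    have egi : g i = d x (Fin.castSucc i) := rfl
    have egj : g j = d x (Fin.castSucc j) := rfl
    have hA : d (Fin.castSucc i) (Fin.castSucc j) = |f i - f j| := hf i j
    have hanneg : (0:ℝ) ≤ |f i - f j| := abs_nonneg _
    constructor
    · intro hadj
      have hmem := (xE (Fin.castSucc i) (Fin.castSucc j) (ιlt i) (ιlt j) hinj).2 hadj
      have hcc := col_cases d hmet.symm hmem (Ne.symm (ιnex i)).symm.symm
        (Ne.symm (ιnex j)).symm.symm hinj
      rcases hcc with h | h | h
      · rw [← egi, ← egj, hA] at h
        left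
        rw [abs_sub_comm, abs_of_nonneg (by linarith)]
        linarith
      · rw [hmet.symm (Fin.castSucc i) x] at h
        rw [← egi, ← egj, hA] at h
        right
        exact h
      · rw [hmet.symm (Fin.castSucc j) (Fin.castSucc i)] at h
        rw [← egi, ← egj, hA] at h
        left
        rw [abs_of_nonneg (by linarith)]
        linarith
    · intro hor
      apply (xE (Fin.castSucc i) (Fin.castSucc j) (ιlt i) (ιlt j) hinj).1
      rcases hor with habs | hsum
      · rcases abs_cases (g i - g j) with ⟨e1, _⟩ | ⟨e1, _⟩
        · refine ⟨x, Fin.castSucc j, Fin.castSucc i, by ext z; simp; tauto,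
            Ne.symm (ιnex j), Ne.symm (ιnex i), Ne.symm hinj, ?_⟩
          have h1 : d (Fin.castSucc j) (Fin.castSucc i) = |f i - f j| := by
            rw [hmet.symm (Fin.castSucc j) (Fin.castSucc i)]; exact hA
          rw [h1, ← egi, ← egj]
          linarith
        · refine ⟨x, Fin.castSucc i, Fin.castSucc j, rfl,
            Ne.symm (ιnex i), Ne.symm (ιnex j), hinj, ?_⟩
          rw [hA, ← egi, ← egj]
          linarith
      · refine ⟨Fin.castSucc i, x, Fin.castSucc j, by ext z; simp; tauto,
          ιnex i, hinj, Ne.symm (ιnex j), ?_⟩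
        rw [hA, hmet.symm (Fin.castSucc i) x, ← egi, ← egj]
        linarith
  set π := Tuple.sort f with hπ
  have hmono : Monotone (f ∘ π) := Tuple.monotone_sort f
  have hFstrict : StrictMono (f ∘ π) :=
    hmono.strictMono_of_injective (finj.comp (Equiv.injective π))
  set Hc : ℕ → ℝ := fun i => if h : i < n then g (π ⟨i, h⟩) - f (π ⟨i, h⟩) else 0 with hHc
  set Kc : ℕ → ℝ := fun i => if h : i < n then g (π ⟨i, h⟩) + f (π ⟨i, h⟩) else 0 with hKc
  set AdjC : ℕ → ℕ → Prop :=
    fun i j => ∃ (hi : i < n) (hj : j < n), cycAdj n (π ⟨i, hi⟩).val (π ⟨j, hj⟩).val with hAdjC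
  have πvalinj : ∀ (i j : Fin n), (π i).val = (π j).val → i = j :=
    fun i j e => Equiv.injective π (Fin.ext e)
  have HcEq : ∀ (i : ℕ) (h : i < n), Hc i = g (π ⟨i, h⟩) - f (π ⟨i, h⟩) := by
    intro i h
    simp only [hHc]
    rw [dif_pos h]
  have KcEq : ∀ (i : ℕ) (h : i < n), Kc i = g (π ⟨i, h⟩) + f (π ⟨i, h⟩) := by
    intro i h
    simp only [hKc]
    rw [dif_pos h]
  have hLip : ∀ (a b : Fin n), d (Fin.castSucc a) (Fin.castSucc b) = |f a - f b| := hf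
  have tri1 : ∀ a b : Fin n, g b ≤ g a + |f a - f b| := by
    intro a b
    have h1 := hmet.triangle x (Fin.castSucc a) (Fin.castSucc b)
    have h2 := hLip a b
    have e1 : g a = d x (Fin.castSucc a) := rfl
    have e2 : g b = d x (Fin.castSucc b) := rfl
    linarith
  have tri2 : ∀ a b : Fin n, |f a - f b| ≤ g a + g b := by
    intro a b
    have h1 := hmet.triangle (Fin.castSucc a) x (Fin.castSucc b)
    have h2 := hLip a b
    have h3 := hmet.symm (Fin.castSucc a) x
    have e1 : g a = d x (Fin.castSucc a) := rfl
    have e2 : g b = d x (Fin.castSucc b) := rfl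
    linarith
  refine core n hn (by obtain ⟨k, hk⟩ := hn; omega) Hc Kc AdjC ?_ ?_ ?_ ?_ ?_ ?_ ?_ ?_ ?_ ?_ ?_
  · rintro i j ⟨hi, hj, h⟩
    exact ⟨hj, hi, cA_sym _ _ h⟩
  · rintro i ⟨hi, hi2, h⟩
    have h' : cycAdj n (π ⟨i, hi⟩).val (π ⟨i, hi⟩).val := h
    have hlt := (π ⟨i, hi⟩).isLt
    simp only [cycAdj] at h'
    set_option maxHeartbeats 1000000 in omega
  · intro i hi
    set a := (π ⟨i, hi⟩).val with ha
    have han : a < n := (π ⟨i, hi⟩).isLt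
    have hex : ∃ b c, b < n ∧ c < n ∧ b ≠ c ∧ cycAdj n a b ∧ cycAdj n a c := by
      refine ⟨if a + 1 = n then 0 else a + 1, if a = 0 then n - 1 else a - 1, ?_, ?_, ?_, ?_, ?_⟩ <;>
        (try simp only [cycAdj]) <;> split_ifs <;> omega
    obtain ⟨b, c, hb, hc, hbc, h1, h2⟩ := hex
    refine ⟨(π.symm ⟨b, hb⟩).val, (π.symm ⟨c, hc⟩).val, Fin.is_lt _, Fin.is_lt _, ?_, ?_, ?_⟩
    · intro e
      exact hbc (congrArg Fin.val ((Equiv.injective π.symm) (Fin.ext e)))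
    · refine ⟨hi, Fin.is_lt _, ?_⟩
      rw [Fin.eta, Equiv.apply_symm_apply]
      exact h1
    · refine ⟨hi, Fin.is_lt _, ?_⟩
      rw [Fin.eta, Equiv.apply_symm_apply]
      exact h2
  · rintro i p q r hi hp hq hr ⟨hi1, hp1, h1⟩ ⟨hi2, hq1, h2⟩ ⟨hi3, hr1, h3⟩
    have hb1 := (π ⟨p, hp1⟩).isLt
    have hb2 := (π ⟨q, hq1⟩).isLt
    have hb3 := (π ⟨r, hr1⟩).isLt
    have hb0 := (π ⟨i, hi1⟩).isLt
    simp only [cycAdj] at h1 h2 h3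
    have hor : (π ⟨p, hp1⟩).val = (π ⟨q, hq1⟩).val ∨ (π ⟨p, hp1⟩).val = (π ⟨r, hr1⟩).val ∨
        (π ⟨q, hq1⟩).val = (π ⟨r, hr1⟩).val := by omega
    rcases hor with e | e | e
    · exact Or.inl (congrArg Fin.val (πvalinj _ _ e))
    · exact Or.inr (Or.inl (congrArg Fin.val (πvalinj _ _ e)))
    · exact Or.inr (Or.inr (congrArg Fin.val (πvalinj _ _ e)))
  · rintro i j l hi hj hl hij hil hjl ⟨hi1, hj1, h1⟩ ⟨hj2, hl1, h2⟩ ⟨hi2, hl2, h3⟩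
    have n1 : (π ⟨i, hi1⟩).val ≠ (π ⟨j, hj1⟩).val :=
      fun e => hij (congrArg Fin.val (πvalinj _ _ e))
    have n2 : (π ⟨i, hi1⟩).val ≠ (π ⟨l, hl1⟩).val :=
      fun e => hil (congrArg Fin.val (πvalinj _ _ e))
    have n3 : (π ⟨j, hj1⟩).val ≠ (π ⟨l, hl1⟩).val :=
      fun e => hjl (congrArg Fin.val (πvalinj _ _ e))
    have hb1 := (π ⟨i, hi1⟩).isLt
    have hb2 := (π ⟨j, hj1⟩).isLt
    have hb3 := (π ⟨l, hl1⟩).isLt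
    simp only [cycAdj] at h1 h2 h3
    omega
  · rintro i j l m hi hj hl hm hij hil him hjl hjm hlm
      ⟨hi1, hj1, h1⟩ ⟨hj2, hl1, h2⟩ ⟨hl2, hm1, h3⟩ ⟨hm2, hi2, h4'⟩
    have n1 : (π ⟨i, hi1⟩).val ≠ (π ⟨j, hj1⟩).val :=
      fun e => hij (congrArg Fin.val (πvalinj _ _ e))
    have n2 : (π ⟨i, hi1⟩).val ≠ (π ⟨l, hl1⟩).val :=
      fun e => hil (congrArg Fin.val (πvalinj _ _ e))
    have n3 : (π ⟨i, hi1⟩).val ≠ (π ⟨m, hm1⟩).val :=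
      fun e => him (congrArg Fin.val (πvalinj _ _ e))
    have n4 : (π ⟨j, hj1⟩).val ≠ (π ⟨l, hl1⟩).val :=
      fun e => hjl (congrArg Fin.val (πvalinj _ _ e))
    have n5 : (π ⟨j, hj1⟩).val ≠ (π ⟨m, hm1⟩).val :=
      fun e => hjm (congrArg Fin.val (πvalinj _ _ e))
    have n6 : (π ⟨l, hl1⟩).val ≠ (π ⟨m, hm1⟩).val :=
      fun e => hlm (congrArg Fin.val (πvalinj _ _ e))
    have hb1 := (π ⟨i, hi1⟩).isLt
    have hb2 := (π ⟨j, hj1⟩).isLt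
    have hb3 := (π ⟨l, hl1⟩).isLt
    have hb4 := (π ⟨m, hm1⟩).isLt
    simp only [cycAdj] at h1 h2 h3 h4'
    omega
  · -- hHmono
    intro i j hij hjn
    have hi : i < n := by omega
    rw [HcEq i hi, HcEq j hjn]
    have hfle : f (π ⟨i, hi⟩) ≤ f (π ⟨j, hjn⟩) :=
      hmono (by rw [Fin.mk_le_mk]; omega)
    have htr := tri1 (π ⟨i, hi⟩) (π ⟨j, hjn⟩)
    rw [abs_of_nonpos (by linarith)] at htr
    linarith
  · -- hKmono
    intro i j hij hjn
    have hi : i < n := by omega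
    rw [KcEq i hi, KcEq j hjn]
    have hfle : f (π ⟨i, hi⟩) ≤ f (π ⟨j, hjn⟩) :=
      hmono (by rw [Fin.mk_le_mk]; omega)
    have htr := tri1 (π ⟨j, hjn⟩) (π ⟨i, hi⟩)
    rw [abs_sub_comm, abs_of_nonpos (by linarith)] at htr
    linarith
  · -- hHK
    intro i j hij hjn e1 e2
    have hi : i < n := by omega
    rw [HcEq i hi, HcEq j hjn] at e1
    rw [KcEq i hi, KcEq j hjn] at e2
    have hfe : f (π ⟨i, hi⟩) = f (π ⟨j, hjn⟩) := by linarith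
    have hmk : (⟨i, hi⟩ : Fin n) = ⟨j, hjn⟩ := Equiv.injective π (finj hfe)
    rw [Fin.mk.injEq] at hmk
    omega
  · -- hsumLB
    intro i j hij hjn
    have hi : i < n := by omega
    rw [HcEq j hjn, KcEq i hi]
    have htr := tri2 (π ⟨i, hi⟩) (π ⟨j, hjn⟩)
    have := neg_abs_le (f (π ⟨i, hi⟩) - f (π ⟨j, hjn⟩))
    linarith
  · -- hiff
    intro i j hij hjn
    have hi : i < n := by omega
    have hne : (⟨i, hi⟩ : Fin n) ≠ ⟨j, hjn⟩ := by
      intro e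
      rw [Fin.mk.injEq] at e
      omega
    have hπne : π ⟨i, hi⟩ ≠ π ⟨j, hjn⟩ := fun e => hne (Equiv.injective π e)
    have hflt : f (π ⟨i, hi⟩) < f (π ⟨j, hjn⟩) := hFstrict (by rw [Fin.mk_lt_mk]; omega)
    have hA : |f (π ⟨i, hi⟩) - f (π ⟨j, hjn⟩)| =
        f (π ⟨j, hjn⟩) - f (π ⟨i, hi⟩) := by
      rw [abs_sub_comm, abs_of_nonneg (by linarith)]
    have hEI := edgeiff (π ⟨i, hi⟩) (π ⟨j, hjn⟩) hπne
    rw [hA] at hEI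
    rw [HcEq i hi, HcEq j hjn, KcEq i hi, KcEq j hjn]
    constructor
    · rintro ⟨hi1, hj1, h⟩
      have h' : cycAdj n (π ⟨i, hi⟩).val (π ⟨j, hjn⟩).val := h
      rcases hEI.1 h' with habs | hsum
      · rcases abs_cases (g (π ⟨i, hi⟩) - g (π ⟨j, hjn⟩)) with ⟨e1, _⟩ | ⟨e1, _⟩
        · right; left; linarith
        · left; linarith
      · right; right; linarith
    · intro hor
      refine ⟨hi, hjn, hEI.2 ?_⟩
      rcases hor with h | h | h
      · left
        rw [abs_sub_comm, abs_of_nonneg (by linarith)]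
        linarith
      · left
        rw [abs_of_nonneg (by linarith)]
        linarith
      · right; linarith

lemma goal1 (n : ℕ) (h4 : 4 < n) : ∀ s ∈ cycE n, s.ncard = 3 := by
  intro s hs
  rcases hs with ⟨u, v, w, hun, hvn, hwn, huv, huw, hvw, rfl⟩ | ⟨u, v, hun, hvn, hadj, rfl⟩
  · rw [Set.ncard_insert_of_notMem (by simp [huv, huw]),
      Set.ncard_insert_of_notMem (by simp [hvw]), Set.ncard_singleton]
  · have hxu : (⟨n, Nat.lt_succ_self n⟩ : Fin (n+1)) ≠ u := by
      intro e
      rw [← e] at hun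
      simp at hun
    have hxv : (⟨n, Nat.lt_succ_self n⟩ : Fin (n+1)) ≠ v := by
      intro e
      rw [← e] at hvn
      simp at hvn
    have huvne : u ≠ v := by
      have hval : u.val ≠ v.val := by simp only [cycAdj] at hadj; omega
      exact fun e => hval (congrArg Fin.val e)
    rw [Set.ncard_insert_of_notMem (by simp [hxu, hxv]),
      Set.ncard_insert_of_notMem (by simp [huvne]), Set.ncard_singleton]

/-- There are infinitely many minimal non-metric 3-uniform hypergraphs:
for every even `n > 4` there is a minimal non-metric 3-uniform hypergraph
on `n + 1` vertices. -/
theorem stmt_18 :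
    ∀ n : ℕ, Even n → 4 < n →
      ∃ E : Set (Set (Fin (n + 1))),
        (∀ s ∈ E, s.ncard = 3) ∧
        ¬ IsMetricHypergraph E ∧
        ∀ U : Set (Fin (n + 1)), U ≠ Set.univ →
          IsMetricHypergraph (inducedEdges E U) := by
  intro n hn h4
  exact ⟨cycE n, goal1 n h4, goal2 n hn h4, goal3 n h4⟩
end
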